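/- arXiv:2109.14494 — 3 statements merged into one kernel-verified Lean document; each statement's English description precedes it below -/
import Mathlib

section
/- Let ρ ∈ 𝓗^d ⊗ 𝓗^d be Hermitian and let t ≥ 2 be an integer. For every L feasible for the order-t program there exists another feasible L̃ for the order-t program with L̃(1) = L(1) that additionally satisfies L̃(x^α x̄^{α'} y^β ȳ^{β'}) = 0 for all monomials with |α| ≠ |α'| or |β| ≠ |β'|. Consequently, restricting the optimization defining ξ_t^sep(ρ) to linear functionals satisfying this vanishing condition does not change its value. -/
open MvPolynomial ComplexOrder
open scoped ENNReal

/-- Variables of `ℂ[x,x̄,y,ȳ]` for the bipartite setting: `x_i, x̄_i, y_j, ȳ_j`. -/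
abbrev SVar (d : ℕ) := (Fin d ⊕ Fin d) ⊕ (Fin d ⊕ Fin d)

/-- The polynomial ring `ℂ[x,x̄,y,ȳ]`. -/
abbrev SPoly (d : ℕ) := MvPolynomial (SVar d) ℂ

def xv {d : ℕ} (i : Fin d) : SVar d := Sum.inl (Sum.inl i)
def xbv {d : ℕ} (i : Fin d) : SVar d := Sum.inl (Sum.inr i)
def yv {d : ℕ} (j : Fin d) : SVar d := Sum.inr (Sum.inl j)
def ybv {d : ℕ} (j : Fin d) : SVar d := Sum.inr (Sum.inr j)

/-- The conjugate polynomial: conjugate the coefficients and exchange each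
variable with its barred version. -/
noncomputable def sconj {d : ℕ} (p : SPoly d) : SPoly d :=
  rename (Sum.map (Sum.elim Sum.inr Sum.inl) (Sum.elim Sum.inr Sum.inl))
    (map (starRingEnd ℂ) p)

/-- The matrix `xx* ⊗ yy*`, with rows and columns indexed by pairs `(i,j)`. -/
noncomputable def pureState (d : ℕ) (x y : Fin d → ℂ) :
    Matrix (Fin d × Fin d) (Fin d × Fin d) ℂ :=
  Matrix.of fun p q => x p.1 * starRingEnd ℂ (x q.1) * (y p.2 * starRingEnd ℂ (y q.2))

/-- The cone of (unnormalized) separable states. -/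
def SEP (d : ℕ) : Set (Matrix (Fin d × Fin d) (Fin d × Fin d) ℂ) :=
  { ρ | ∃ (r : ℕ) (c : Fin r → ℝ) (x y : Fin r → (Fin d → ℂ)),
      (∀ ℓ, 0 ≤ c ℓ) ∧ (∀ ℓ, ∑ i, Complex.normSq (x ℓ i) = 1) ∧
      (∀ ℓ, ∑ i, Complex.normSq (y ℓ i) = 1) ∧
      ρ = ∑ ℓ, (c ℓ : ℂ) • pureState d (x ℓ) (y ℓ) }

/-- Largest diagonal entry `ρ_max` of `ρ`. -/
noncomputable def rhoMax (d : ℕ) (ρ : Matrix (Fin d × Fin d) (Fin d × Fin d) ℂ) : ℝ :=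
  ⨆ p : Fin d × Fin d, (ρ p p).re

/-- The degree-four monomial `x_i x̄_{i'} y_j ȳ_{j'}`. -/
noncomputable def momPoly {d : ℕ} (i i' j j' : Fin d) : SPoly d :=
  X (xv i) * X (xbv i') * X (yv j) * X (ybv j')

/-- The localizing polynomials `S_ρ`. -/
noncomputable def Sloc (d : ℕ) (ρ : Matrix (Fin d × Fin d) (Fin d × Fin d) ℂ) :
    Set (SPoly d) :=
  (Set.range fun i : Fin d =>
    (C ((Real.sqrt (rhoMax d ρ) : ℂ)) : SPoly d) - X (xv i) * X (xbv i)) ∪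
  (Set.range fun j : Fin d =>
    (C ((Real.sqrt (rhoMax d ρ) : ℂ)) : SPoly d) - X (yv j) * X (ybv j))

/-- The truncated quadratic module `𝓜(S)_{2t}`. -/
def QMt (d : ℕ) (S : Set (SPoly d)) (t : ℕ) : Set (SPoly d) :=
  { q | ∃ (N : ℕ) (c : Fin N → ℝ) (g p : Fin N → SPoly d),
      (∀ s, 0 ≤ c s) ∧ (∀ s, g s ∈ S ∪ {1}) ∧
      (∀ s, (g s * (p s * sconj (p s))).totalDegree ≤ 2 * t) ∧
      q = ∑ s, C (c s : ℂ) * (g s * (p s * sconj (p s))) }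

/-- The (untruncated) quadratic module `𝓜(S)`. -/
def QMf (d : ℕ) (S : Set (SPoly d)) : Set (SPoly d) :=
  { q | ∃ (N : ℕ) (c : Fin N → ℝ) (g p : Fin N → SPoly d),
      (∀ s, 0 ≤ c s) ∧ (∀ s, g s ∈ S ∪ {1}) ∧
      q = ∑ s, C (c s : ℂ) * (g s * (p s * sconj (p s))) }

/-- Feasibility for the order-`t` program defining `ξ_t^sep(ρ)`. -/
def IsFeas (d t : ℕ) (ρ : Matrix (Fin d × Fin d) (Fin d × Fin d) ℂ)
    (L : SPoly d →ₗ[ℂ] ℂ) : Prop :=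
  (∀ p, L (sconj p) = star (L p)) ∧
  (∀ i i' j j', L (momPoly i i' j j') = ρ (i, j) (i', j')) ∧
  (∀ q ∈ QMt d (Sloc d ρ) t, 0 ≤ L q) ∧
  (∀ q : Fin d → Fin d → SPoly d, (∀ i j, (q i j).totalDegree ≤ t - 2) →
    0 ≤ ∑ i, ∑ j, ∑ i', ∑ j',
      L ((C (ρ (i, j) (i', j')) - momPoly i i' j j') * (q i j * sconj (q i' j'))))

/-- Feasibility for the order-`∞` program. -/
def IsFeasInf (d : ℕ) (ρ : Matrix (Fin d × Fin d) (Fin d × Fin d) ℂ)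
    (L : SPoly d →ₗ[ℂ] ℂ) : Prop :=
  (∀ p, L (sconj p) = star (L p)) ∧
  (∀ i i' j j', L (momPoly i i' j j') = ρ (i, j) (i', j')) ∧
  (∀ q ∈ QMf d (Sloc d ρ), 0 ≤ L q) ∧
  (∀ q : Fin d → Fin d → SPoly d,
    0 ≤ ∑ i, ∑ j, ∑ i', ∑ j',
      L ((C (ρ (i, j) (i', j')) - momPoly i i' j j') * (q i j * sconj (q i' j'))))

/-- `ξ_t^sep(ρ)`. -/
noncomputable def xiSep (d t : ℕ) (ρ : Matrix (Fin d × Fin d) (Fin d × Fin d) ℂ) : ℝ≥0∞ :=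
  sInf { e | ∃ L : SPoly d →ₗ[ℂ] ℂ, IsFeas d t ρ L ∧ e = ENNReal.ofReal (L 1).re }

/-- `ξ_∞^sep(ρ)`. -/
noncomputable def xiSepInf (d : ℕ) (ρ : Matrix (Fin d × Fin d) (Fin d × Fin d) ℂ) : ℝ≥0∞ :=
  sInf { e | ∃ L : SPoly d →ₗ[ℂ] ℂ, IsFeasInf d ρ L ∧ e = ENNReal.ofReal (L 1).re }


/-- `L` vanishes on all unbalanced monomials `x^α x̄^{α'} y^β ȳ^{β'}` (those
with `|α| ≠ |α'|` or `|β| ≠ |β'|`). -/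
def BalancedL (d : ℕ) (L : SPoly d →ₗ[ℂ] ℂ) : Prop :=
  ∀ al al' be be' : Fin d → ℕ,
    ((∑ i, al i) ≠ (∑ i, al' i) ∨ (∑ j, be j) ≠ (∑ j, be' j)) →
    L ((∏ i, X (xv i) ^ al i) * (∏ i, X (xbv i) ^ al' i) *
        (∏ j, X (yv j) ^ be j) * (∏ j, X (ybv j) ^ be' j)) = 0

-- balanced monomials
def bal {d : ℕ} (m : SVar d →₀ ℕ) : Prop :=
  (∑ i, m (xv i)) = (∑ i, m (xbv i)) ∧ (∑ j, m (yv j)) = (∑ j, m (ybv j))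

instance {d : ℕ} (m : SVar d →₀ ℕ) : Decidable (bal m) := by unfold bal; infer_instance

noncomputable def balProj {d : ℕ} : SPoly d →ₗ[ℂ] SPoly d :=
  Finsupp.lsum ℂ (fun m => if bal m then (monomial m : ℂ →ₗ[ℂ] SPoly d) else 0) ∘ₗ
    (AddMonoidAlgebra.coeffLinearEquiv ℂ).toLinearMap

lemma balProj_monomial {d : ℕ} (m : SVar d →₀ ℕ) (c : ℂ) :
    balProj (monomial m c) = if bal m then monomial m c else 0 := by
  classical
  show Finsupp.lsum ℂ _ (Finsupp.single m c) = _
  rw [Finsupp.lsum_single]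
  split <;> simp

lemma coeff_balProj {d : ℕ} (p : SPoly d) (m : SVar d →₀ ℕ) :
    coeff m (balProj p) = if bal m then coeff m p else 0 := by
  classical
  induction p using MvPolynomial.induction_on' with
  | monomial u a =>
    rw [balProj_monomial]
    by_cases hu : bal u <;> by_cases hm : bal m <;>
      simp only [hu, hm, coeff_monomial, if_true, if_false, coeff_zero] <;>
      first
        | rfl
        | (rw [if_neg (fun h : u = m => by subst h; simp_all)])
  | add p q hp hq =>
    rw [map_add, coeff_add, hp, hq, coeff_add]
    split <;> simp

/-- a polynomial is balanced if all monomials in its support are balanced -/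
def IsBal {d : ℕ} (p : SPoly d) : Prop := ∀ m ∈ p.support, bal m

lemma balProj_eq_self {d : ℕ} {p : SPoly d} (h : IsBal p) : balProj p = p := by
  ext m
  rw [coeff_balProj]
  by_cases hm : bal m
  · simp [hm]
  · simp only [hm, if_false]
    by_contra hc
    exact hm (h m (by simpa [MvPolynomial.mem_support_iff] using Ne.symm hc))

lemma isBal_C {d : ℕ} (c : ℂ) : IsBal (C c : SPoly d) := by
  intro m hm
  rcases (by
    by_contra h0
    simp [MvPolynomial.mem_support_iff, MvPolynomial.coeff_C, Ne.symm h0] at hm : m = 0) with rfl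
  constructor <;> simp

-- the swap of variables
def swapv {d : ℕ} : SVar d → SVar d :=
  Sum.map (Sum.elim Sum.inr Sum.inl) (Sum.elim Sum.inr Sum.inl)

lemma swapv_invol {d : ℕ} : Function.Involutive (swapv (d := d)) := by
  rintro ((i|i)|(j|j)) <;> rfl

lemma swapv_inj {d : ℕ} : Function.Injective (swapv (d := d)) := swapv_invol.injective

@[simp] lemma swapv_xv {d : ℕ} (i : Fin d) : swapv (xv i) = xbv i := rfl
@[simp] lemma swapv_xbv {d : ℕ} (i : Fin d) : swapv (xbv i) = xv i := rfl
@[simp] lemma swapv_yv {d : ℕ} (j : Fin d) : swapv (yv j) = ybv j := rfl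
@[simp] lemma swapv_ybv {d : ℕ} (j : Fin d) : swapv (ybv j) = yv j := rfl

noncomputable def swapm {d : ℕ} (m : SVar d →₀ ℕ) : SVar d →₀ ℕ :=
  Finsupp.mapDomain swapv m

lemma swapm_apply {d : ℕ} (m : SVar d →₀ ℕ) (v : SVar d) :
    swapm m v = m (swapv v) := by
  conv_lhs => rw [show v = swapv (swapv v) from (swapv_invol v).symm]
  exact Finsupp.mapDomain_apply swapv_inj m (swapv v)

lemma swapm_invol {d : ℕ} (m : SVar d →₀ ℕ) : swapm (swapm m) = m := by
  ext v; rw [swapm_apply, swapm_apply, swapv_invol]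

lemma coeff_sconj {d : ℕ} (p : SPoly d) (m : SVar d →₀ ℕ) :
    coeff m (sconj p) = starRingEnd ℂ (coeff (swapm m) p) := by
  have h : Finsupp.mapDomain swapv (swapm m) = m := swapm_invol m
  calc coeff m (sconj p)
      = coeff (Finsupp.mapDomain swapv (swapm m))
          (rename swapv (map (starRingEnd ℂ) p)) := by rw [h]; rfl
    _ = coeff (swapm m) (map (starRingEnd ℂ) p) :=
        MvPolynomial.coeff_rename_mapDomain _ swapv_inj _ _
    _ = starRingEnd ℂ (coeff (swapm m) p) := MvPolynomial.coeff_map _ _ _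

lemma bal_swapm {d : ℕ} (m : SVar d →₀ ℕ) : bal (swapm m) ↔ bal m := by
  unfold bal
  simp only [swapm_apply, swapv_xv, swapv_xbv, swapv_yv, swapv_ybv]
  constructor <;> rintro ⟨h1, h2⟩ <;> exact ⟨h1.symm, h2.symm⟩

lemma balProj_sconj {d : ℕ} (p : SPoly d) : balProj (sconj p) = sconj (balProj p) := by
  ext m
  rw [coeff_balProj, coeff_sconj, coeff_sconj, coeff_balProj]
  by_cases hm : bal m
  · simp [hm, (bal_swapm m).mpr hm]
  · have h2 : ¬ bal (swapm m) := fun h => hm ((bal_swapm m).mp h)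
    simp [hm, h2]

lemma sconj_add {d : ℕ} (p q : SPoly d) : sconj (p + q) = sconj p + sconj q := by
  simp [sconj, map_add]

lemma sconj_mul {d : ℕ} (p q : SPoly d) : sconj (p * q) = sconj p * sconj q := by
  simp [sconj, map_mul]

lemma sconj_C {d : ℕ} (c : ℂ) : sconj (C c : SPoly d) = C (starRingEnd ℂ c) := by
  simp [sconj]

lemma sconj_X {d : ℕ} (v : SVar d) : sconj (X v : SPoly d) = X (swapv v) := by
  simp [sconj]; rfl

-- the scaling substitution
noncomputable def scfun {d : ℕ} (u v : ℂ) : SVar d → ℂ :=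
  Sum.elim (Sum.elim (fun _ => u) (fun _ => u⁻¹)) (Sum.elim (fun _ => v) (fun _ => v⁻¹))

noncomputable def sigma {d : ℕ} (u v : ℂ) : SPoly d →ₐ[ℂ] SPoly d :=
  aeval (fun w => C (scfun u v w) * X w)

noncomputable def chi {d : ℕ} (u v : ℂ) (m : SVar d →₀ ℕ) : ℂ :=
  m.prod (fun w k => scfun u v w ^ k)

lemma sigma_monomial {d : ℕ} (u v : ℂ) (m : SVar d →₀ ℕ) (c : ℂ) :
    sigma u v (monomial m c) = monomial m (chi u v m * c) := by
  rw [sigma, aeval_monomial]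
  have : (m.prod fun w k => (C (scfun u v w) * X w) ^ k)
      = C (chi u v m) * m.prod fun w k => (X w : SPoly d) ^ k := by
    rw [chi, Finsupp.prod, Finsupp.prod, Finsupp.prod, map_prod, ← Finset.prod_mul_distrib]
    exact Finset.prod_congr rfl fun w _ => by rw [mul_pow, map_pow]
  rw [this, algebraMap_eq, ← mul_assoc, ← map_mul, mul_comm c, monomial_eq]

lemma coeff_sigma {d : ℕ} (u v : ℂ) (p : SPoly d) (m : SVar d →₀ ℕ) :
    coeff m (sigma u v p) = chi u v m * coeff m p := by
  induction p using MvPolynomial.induction_on' with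
  | monomial u' a =>
    rw [sigma_monomial, coeff_monomial, coeff_monomial]
    split
    · next h => subst h; ring
    · ring
  | add p q hp hq => rw [map_add, coeff_add, hp, hq, coeff_add]; ring

lemma support_sigma {d : ℕ} (u v : ℂ) (p : SPoly d) :
    (sigma u v p).support ⊆ p.support := by
  intro m hm
  rw [MvPolynomial.mem_support_iff] at hm ⊢
  intro h
  rw [coeff_sigma, h, mul_zero] at hm
  exact hm rfl

lemma totalDegree_sigma_le {d : ℕ} (u v : ℂ) (p : SPoly d) :
    (sigma u v p).totalDegree ≤ p.totalDegree :=
  Finset.sup_mono (support_sigma u v p)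

lemma chi_eq {d : ℕ} (u v : ℂ) (m : SVar d →₀ ℕ) :
    chi u v m = u ^ (∑ i, m (xv i)) * u⁻¹ ^ (∑ i, m (xbv i)) *
      (v ^ (∑ j, m (yv j)) * v⁻¹ ^ (∑ j, m (ybv j))) := by
  rw [chi, Finsupp.prod_fintype _ _ (fun w => pow_zero _)]
  rw [Fintype.prod_sum_type]
  congr 1 <;> rw [Fintype.prod_sum_type] <;> congr 1 <;>
    rw [← Finset.prod_pow_eq_pow_sum] <;> rfl

lemma chi_of_bal {d : ℕ} {u v : ℂ} (hu : u ≠ 0) (hv : v ≠ 0) {m : SVar d →₀ ℕ}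
    (hm : bal m) : chi u v m = 1 := by
  rw [chi_eq, ← hm.1, ← hm.2, ← mul_pow, ← mul_pow, mul_inv_cancel₀ hu,
    mul_inv_cancel₀ hv, one_pow, one_pow, one_mul]

lemma sigma_of_isBal {d : ℕ} {u v : ℂ} (hu : u ≠ 0) (hv : v ≠ 0) {p : SPoly d}
    (hp : IsBal p) : sigma u v p = p := by
  ext m
  rw [coeff_sigma]
  by_cases hm : m ∈ p.support
  · rw [chi_of_bal hu hv (hp m hm), one_mul]
  · rw [MvPolynomial.notMem_support_iff.mp hm, mul_zero]

lemma sconj_sigma {d : ℕ} {u v : ℂ} (hu : starRingEnd ℂ u = u⁻¹)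
    (hv : starRingEnd ℂ v = v⁻¹) (p : SPoly d) :
    sconj (sigma u v p) = sigma u v (sconj p) := by
  have key : ∀ w : SVar d, starRingEnd ℂ (scfun u v w) = scfun u v (swapv w) := by
    rintro ((i|i)|(j|j)) <;>
      simp only [scfun, swapv, Sum.map_inl, Sum.map_inr, Sum.elim_inl, Sum.elim_inr, hu, hv,
        map_inv₀, inv_inv] <;> rfl
  induction p using MvPolynomial.induction_on with
  | C c =>
    rw [show sigma u v (C c) = C c from aeval_C _ c, sconj_C,
      show sigma u v (C (starRingEnd ℂ c)) = C (starRingEnd ℂ c) from aeval_C _ _]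
  | add p q hp hq => rw [map_add, sconj_add, sconj_add, map_add, hp, hq]
  | mul_X p w hp =>
    rw [map_mul, sconj_mul, sconj_mul, map_mul, hp]
    congr 1
    rw [show sigma u v (X w) = C (scfun u v w) * X w from aeval_X _ w, sconj_mul, sconj_C,
      sconj_X,
      show sigma u v (X (swapv w)) = C (scfun u v (swapv w)) * X (swapv w) from aeval_X _ _]
    rw [key]

lemma pow_mul_inv_pow (x : ℂ) (hx : x ≠ 0) (s s' : ℕ) :
    x ^ s * x⁻¹ ^ s' = x ^ ((s : ℤ) - (s' : ℤ)) := by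
  rw [zpow_sub₀ hx, zpow_natCast, zpow_natCast, div_eq_mul_inv, inv_pow]

lemma geom_sum_root {N : ℕ} (hN : 0 < N) (ω : ℂ) (hω : ω ^ N = 1) :
    ∑ a : Fin N, ω ^ (a : ℕ) = if ω = 1 then (N : ℂ) else 0 := by
  rw [Fin.sum_univ_eq_sum_range]
  split
  · next h => subst h; simp
  · next h => rw [geom_sum_eq h, hω, sub_self, zero_div]

/-- The key averaging identity. -/
lemma avg_eq {d N : ℕ} (hN : 0 < N) (p : SPoly d)
    (hp : ∀ m ∈ p.support,
      (∑ i, m (xv i)) < N ∧ (∑ i, m (xbv i)) < N ∧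
      (∑ j, m (yv j)) < N ∧ (∑ j, m (ybv j)) < N) :
    ∑ a : Fin N, ∑ b : Fin N,
      sigma (Complex.exp (2 * Real.pi * Complex.I / N) ^ (a : ℕ))
            (Complex.exp (2 * Real.pi * Complex.I / N) ^ (b : ℕ)) p
      = ((N : ℂ) ^ 2) • balProj p := by
  classical
  set ζ : ℂ := Complex.exp (2 * Real.pi * Complex.I / N) with hζdef
  have hprim : IsPrimitiveRoot ζ N := Complex.isPrimitiveRoot_exp N hN.ne'
  have hζ0 : ζ ≠ 0 := Complex.exp_ne_zero _
  have hζN : ζ ^ N = 1 := hprim.pow_eq_one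
  ext m
  rw [MvPolynomial.coeff_smul, coeff_balProj]
  rw [MvPolynomial.coeff_sum]
  simp only [MvPolynomial.coeff_sum, coeff_sigma, chi_eq]
  -- abbreviations for the four exponent sums
  set sX : ℕ := ∑ i, m (xv i)
  set sXb : ℕ := ∑ i, m (xbv i)
  set sY : ℕ := ∑ j, m (yv j)
  set sYb : ℕ := ∑ j, m (ybv j)
  set kX : ℤ := (sX : ℤ) - (sXb : ℤ) with hkX
  set kY : ℤ := (sY : ℤ) - (sYb : ℤ) with hkY
  have hA : ∀ a : Fin N, (ζ ^ (a:ℕ)) ^ sX * ((ζ ^ (a:ℕ))⁻¹) ^ sXb = (ζ ^ kX) ^ (a:ℕ) := by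
    intro a
    rw [pow_mul_inv_pow _ (pow_ne_zero _ hζ0), ← zpow_natCast ζ (a:ℕ), ← zpow_mul,
      ← zpow_natCast (ζ ^ kX) (a:ℕ), ← zpow_mul]
    congr 1
    ring
  have hB : ∀ b : Fin N, (ζ ^ (b:ℕ)) ^ sY * ((ζ ^ (b:ℕ))⁻¹) ^ sYb = (ζ ^ kY) ^ (b:ℕ) := by
    intro b
    rw [pow_mul_inv_pow _ (pow_ne_zero _ hζ0), ← zpow_natCast ζ (b:ℕ), ← zpow_mul,
      ← zpow_natCast (ζ ^ kY) (b:ℕ), ← zpow_mul]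
    congr 1
    ring
  have hroot : ∀ k : ℤ, (ζ ^ k) ^ N = 1 := by
    intro k
    rw [← zpow_natCast (ζ ^ k), ← zpow_mul, mul_comm, zpow_mul, zpow_natCast, hζN, one_zpow]
  calc (∑ a : Fin N, ∑ b : Fin N,
        (ζ ^ (a:ℕ)) ^ sX * ((ζ ^ (a:ℕ))⁻¹) ^ sXb *
          ((ζ ^ (b:ℕ)) ^ sY * ((ζ ^ (b:ℕ))⁻¹) ^ sYb) * coeff m p)
      = (∑ a : Fin N, (ζ ^ kX) ^ (a:ℕ)) * (∑ b : Fin N, (ζ ^ kY) ^ (b:ℕ)) * coeff m p := by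
        rw [Finset.sum_mul_sum, Finset.sum_mul]
        exact Finset.sum_congr rfl fun a _ => by
          rw [Finset.sum_mul]
          exact Finset.sum_congr rfl fun b _ => by rw [hA, hB]
    _ = (N : ℂ) ^ 2 * if bal m then coeff m p else 0 := by
        by_cases hm : m ∈ p.support
        · obtain ⟨h1, h2, h3, h4⟩ := hp m hm
          rw [geom_sum_root hN _ (hroot kX), geom_sum_root hN _ (hroot kY)]
          have hXiff : ζ ^ kX = 1 ↔ kX = 0 := by
            rw [hprim.zpow_eq_one_iff_dvd]
            constructor
            · intro h
              exact Int.eq_zero_of_abs_lt_dvd h (abs_lt.mpr ⟨by omega, by omega⟩)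
            · intro h; exact h ▸ dvd_zero _
          have hYiff : ζ ^ kY = 1 ↔ kY = 0 := by
            rw [hprim.zpow_eq_one_iff_dvd]
            constructor
            · intro h
              exact Int.eq_zero_of_abs_lt_dvd h (abs_lt.mpr ⟨by omega, by omega⟩)
            · intro h; exact h ▸ dvd_zero _
          have hbal : bal m ↔ (kX = 0 ∧ kY = 0) := by
            unfold bal
            constructor
            · rintro ⟨e1, e2⟩; constructor <;> omega
            · rintro ⟨e1, e2⟩; constructor <;> omega
          by_cases hb : bal m
          · obtain ⟨e1, e2⟩ := hbal.mp hb
            rw [if_pos (hXiff.mpr e1), if_pos (hYiff.mpr e2), if_pos hb]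
            ring
          · have : ¬ (kX = 0 ∧ kY = 0) := fun h => hb (hbal.mpr h)
            rw [if_neg hb]
            by_cases e1 : kX = 0
            · have e2 : ¬ kY = 0 := fun h => this ⟨e1, h⟩
              rw [if_neg (fun h => e2 (hYiff.mp h))]
              ring
            · rw [if_neg (fun h => e1 (hXiff.mp h))]
              ring
        · rw [MvPolynomial.notMem_support_iff.mp hm]
          split <;> ring

lemma block_sums_le {d : ℕ} (m : SVar d →₀ ℕ) :
    (∑ i, m (xv i)) ≤ m.sum (fun _ k => k) ∧ (∑ i, m (xbv i)) ≤ m.sum (fun _ k => k) ∧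
    (∑ j, m (yv j)) ≤ m.sum (fun _ k => k) ∧ (∑ j, m (ybv j)) ≤ m.sum (fun _ k => k) := by
  have h : m.sum (fun _ k => k) = (∑ i, m (xv i)) + (∑ i, m (xbv i)) +
      ((∑ j, m (yv j)) + (∑ j, m (ybv j))) := by
    rw [Finsupp.sum_fintype _ _ (fun _ => rfl), Fintype.sum_sum_type,
      Fintype.sum_sum_type, Fintype.sum_sum_type]
    rfl
  omega

lemma deg_lt_bounds {d N : ℕ} {p : SPoly d} (h : p.totalDegree < N) :
    ∀ m ∈ p.support,
      (∑ i, m (xv i)) < N ∧ (∑ i, m (xbv i)) < N ∧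
      (∑ j, m (yv j)) < N ∧ (∑ j, m (ybv j)) < N := by
  intro m hm
  have h1 := MvPolynomial.le_totalDegree hm
  have h2 := block_sums_le m
  omega

lemma totalDegree_sconj_le {d : ℕ} (p : SPoly d) : (sconj p).totalDegree ≤ p.totalDegree :=
  le_trans (MvPolynomial.totalDegree_rename_le _ _)
    (Finset.sup_mono (MvPolynomial.support_map_subset _ _))

-- IsBal closure lemmas
lemma isBal_monomial {d : ℕ} {m : SVar d →₀ ℕ} (hm : bal m) (c : ℂ) :
    IsBal (monomial m c : SPoly d) := by
  classical
  intro m' hm'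
  rw [MvPolynomial.support_monomial] at hm'
  split at hm'
  · simp at hm'
  · rw [Finset.mem_singleton] at hm'; subst hm'; exact hm

lemma isBal_sub {d : ℕ} {p q : SPoly d} (hp : IsBal p) (hq : IsBal q) : IsBal (p - q) := by
  intro m hm
  rcases Finset.mem_union.mp (MvPolynomial.support_sub _ p q hm) with h | h
  · exact hp m h
  · exact hq m h

lemma isBal_one {d : ℕ} : IsBal (1 : SPoly d) := by
  rw [show (1 : SPoly d) = C 1 from rfl]; exact isBal_C 1

-- product of monomials
lemma prod_monomial {d : ℕ} {ι : Type*} (s : Finset ι) (f : ι → (SVar d →₀ ℕ)) :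
    (∏ i ∈ s, (monomial (f i) (1:ℂ) : SPoly d)) = monomial (∑ i ∈ s, f i) 1 := by
  classical
  induction s using Finset.cons_induction with
  | empty => simp
  | cons a s ha ih =>
      rw [Finset.prod_cons, Finset.sum_cons, ih, monomial_mul, one_mul]

lemma sum_single_apply_same {d : ℕ} (al : Fin d → ℕ) (f : Fin d → SVar d)
    (hf : Function.Injective f) (i : Fin d) :
    (∑ i', Finsupp.single (f i') (al i')) (f i) = al i := by
  rw [Finsupp.finset_sum_apply]
  rw [Finset.sum_eq_single i]
  · rw [Finsupp.single_apply, if_pos rfl]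
  · intro b _ hb
    rw [Finsupp.single_apply, if_neg (fun h => hb (hf h))]
  · intro h; exact absurd (Finset.mem_univ i) h

lemma sum_single_apply_ne {d : ℕ} (al : Fin d → ℕ) (f : Fin d → SVar d)
    (v : SVar d) (hv : ∀ i, f i ≠ v) :
    (∑ i', Finsupp.single (f i') (al i')) v = 0 := by
  rw [Finsupp.finset_sum_apply]
  exact Finset.sum_eq_zero fun b _ => by rw [Finsupp.single_apply, if_neg (hv b)]

-- balancedness of the specific polynomials
lemma bal_mom_exps {d : ℕ} (i i' j j' : Fin d) :
    bal (Finsupp.single (xv i) 1 + Finsupp.single (xbv i') 1 +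
      Finsupp.single (yv j) 1 + Finsupp.single (ybv j') 1) := by
  constructor <;>
    simp [Finsupp.add_apply, Finset.sum_add_distrib, Finsupp.single_apply, xv, xbv, yv, ybv]

lemma momPoly_eq_monomial {d : ℕ} (i i' j j' : Fin d) :
    momPoly i i' j j' = monomial (Finsupp.single (xv i) 1 + Finsupp.single (xbv i') 1 +
      Finsupp.single (yv j) 1 + Finsupp.single (ybv j') 1) (1:ℂ) := by
  simp [momPoly, MvPolynomial.X, monomial_mul]

lemma isBal_momPoly {d : ℕ} (i i' j j' : Fin d) : IsBal (momPoly i i' j j') := by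
  rw [momPoly_eq_monomial]; exact isBal_monomial (bal_mom_exps i i' j j') 1

lemma isBal_sloc {d : ℕ} (ρ : Matrix (Fin d × Fin d) (Fin d × Fin d) ℂ) :
    ∀ g ∈ Sloc d ρ ∪ {1}, IsBal g := by
  rintro g (hg | hg)
  · have key : ∀ (v w : SVar d), bal (Finsupp.single v 1 + Finsupp.single w 1) →
        IsBal ((C ((Real.sqrt (rhoMax d ρ) : ℂ)) : SPoly d) - X v * X w) := by
      intro v w hb
      refine isBal_sub (isBal_C _) ?_
      rw [show (X v * X w : SPoly d) = monomial (Finsupp.single v 1 + Finsupp.single w 1) 1 by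
        simp [MvPolynomial.X, monomial_mul]]
      exact isBal_monomial hb 1
    rcases hg with ⟨i, rfl⟩ | ⟨j, rfl⟩
    · refine key _ _ ?_
      constructor <;>
        simp [Finsupp.add_apply, Finset.sum_add_distrib, Finsupp.single_apply, xv, xbv, yv, ybv]
    · refine key _ _ ?_
      constructor <;>
        simp [Finsupp.add_apply, Finset.sum_add_distrib, Finsupp.single_apply, xv, xbv, yv, ybv]
  · rw [Set.mem_singleton_iff] at hg; subst hg; exact isBal_one

lemma star_zeta_pow (N : ℕ) (a : ℕ) :
    starRingEnd ℂ (Complex.exp (2 * Real.pi * Complex.I / N) ^ a)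
      = (Complex.exp (2 * Real.pi * Complex.I / N) ^ a)⁻¹ := by
  rw [map_pow, ← inv_pow]
  congr 1
  rw [← Complex.exp_conj, ← Complex.exp_neg]
  congr 1
  have h2 : (starRingEnd ℂ) 2 = 2 := by
    rw [show (2:ℂ) = ((2:ℝ):ℂ) by norm_num, Complex.conj_ofReal]
  simp [map_div₀, Complex.conj_I, h2]
  ring

lemma L_balProj_eq_sum {d t : ℕ} (L : SPoly d →ₗ[ℂ] ℂ) (q : SPoly d)
    (hq : q.totalDegree ≤ 2 * t) :
    L (balProj q) = ((((2*t+1 : ℕ)) : ℂ)^2)⁻¹ * ∑ a : Fin (2*t+1), ∑ b : Fin (2*t+1),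
      L (sigma (Complex.exp (2 * Real.pi * Complex.I / (2*t+1 : ℕ)) ^ (a:ℕ))
               (Complex.exp (2 * Real.pi * Complex.I / (2*t+1 : ℕ)) ^ (b:ℕ)) q) := by
  have hN : (0:ℕ) < 2*t+1 := Nat.succ_pos _
  have havg := avg_eq hN q (deg_lt_bounds (lt_of_le_of_lt hq (Nat.lt_succ_self _)))
  have hne : (((2*t+1 : ℕ)) : ℂ)^2 ≠ 0 := by
    apply pow_ne_zero; exact_mod_cast hN.ne'
  have : balProj q = ((((2*t+1 : ℕ)) : ℂ)^2)⁻¹ • ∑ a : Fin (2*t+1), ∑ b : Fin (2*t+1),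
      sigma (Complex.exp (2 * Real.pi * Complex.I / (2*t+1 : ℕ)) ^ (a:ℕ))
            (Complex.exp (2 * Real.pi * Complex.I / (2*t+1 : ℕ)) ^ (b:ℕ)) q := by
    rw [havg, smul_smul, inv_mul_cancel₀ hne, one_smul]
  rw [this, map_smul, smul_eq_mul]
  congr 1
  rw [map_sum]
  exact Finset.sum_congr rfl fun a _ => by rw [map_sum]

lemma inv_sq_N_nonneg (N : ℕ) : 0 ≤ (((N:ℕ):ℂ)^2)⁻¹ := by
  have h : (((N:ℕ):ℂ)^2)⁻¹ = Complex.ofReal (((N:ℝ)^2)⁻¹) := by push_cast; ring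
  rw [h]
  have h2 : (0:ℝ) ≤ ((N:ℝ)^2)⁻¹ := inv_nonneg.mpr (sq_nonneg _)
  exact_mod_cast h2

lemma sigma_qm_term {d : ℕ} {u v : ℂ} (hu0 : u ≠ 0) (hv0 : v ≠ 0)
    (hcu : starRingEnd ℂ u = u⁻¹) (hcv : starRingEnd ℂ v = v⁻¹)
    {g : SPoly d} (hg : IsBal g) (p : SPoly d) :
    sigma u v (g * (p * sconj p)) = g * (sigma u v p * sconj (sigma u v p)) := by
  rw [map_mul, map_mul, sigma_of_isBal hu0 hv0 hg, sconj_sigma hcu hcv]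

lemma qm_term_mem {d t : ℕ} (ρ : Matrix (Fin d × Fin d) (Fin d × Fin d) ℂ)
    {g : SPoly d} (hg : g ∈ Sloc d ρ ∪ {1}) (p : SPoly d)
    (hdeg : (g * (p * sconj p)).totalDegree ≤ 2*t) :
    g * (p * sconj p) ∈ QMt d (Sloc d ρ) t :=
  ⟨1, fun _ => 1, fun _ => g, fun _ => p, fun _ => zero_le_one, fun _ => hg,
    fun _ => hdeg, by simp⟩

lemma totalDegree_C_sub_mom_le {d : ℕ} (a : ℂ) (i i' j j' : Fin d) :
    (C a - momPoly i i' j j').totalDegree ≤ 4 := by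
  rw [sub_eq_add_neg]
  refine le_trans (MvPolynomial.totalDegree_add _ _) (max_le ?_ ?_)
  · simp [MvPolynomial.totalDegree_C]
  · rw [MvPolynomial.totalDegree_neg, momPoly]
    refine le_trans (MvPolynomial.totalDegree_mul _ _) ?_
    have h1 : (X (xv i) * X (xbv i') * X (yv j) : SPoly d).totalDegree ≤ 3 := by
      refine le_trans (MvPolynomial.totalDegree_mul _ _) ?_
      have h2 : (X (xv i) * X (xbv i') : SPoly d).totalDegree ≤ 2 :=
        le_trans (MvPolynomial.totalDegree_mul _ _)
          (by simp [MvPolynomial.totalDegree_X])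
      simp only [MvPolynomial.totalDegree_X]
      omega
    simp only [MvPolynomial.totalDegree_X]
    omega

noncomputable def Fsum {d : ℕ} (ρ : Matrix (Fin d × Fin d) (Fin d × Fin d) ℂ)
    (q : Fin d → Fin d → SPoly d) : SPoly d :=
  ∑ i, ∑ j, ∑ i', ∑ j',
    (C (ρ (i, j) (i', j')) - momPoly i i' j j') * (q i j * sconj (q i' j'))

lemma L_Fsum {d : ℕ} (L : SPoly d →ₗ[ℂ] ℂ) (ρ : Matrix (Fin d × Fin d) (Fin d × Fin d) ℂ)
    (q : Fin d → Fin d → SPoly d) :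
    L (Fsum ρ q) = ∑ i, ∑ j, ∑ i', ∑ j',
      L ((C (ρ (i, j) (i', j')) - momPoly i i' j j') * (q i j * sconj (q i' j'))) := by
  simp only [Fsum, map_sum]

lemma sigma_Fsum {d : ℕ} {u v : ℂ} (hu0 : u ≠ 0) (hv0 : v ≠ 0)
    (hcu : starRingEnd ℂ u = u⁻¹) (hcv : starRingEnd ℂ v = v⁻¹)
    (ρ : Matrix (Fin d × Fin d) (Fin d × Fin d) ℂ) (q : Fin d → Fin d → SPoly d) :
    sigma u v (Fsum ρ q) = Fsum ρ (fun i j => sigma u v (q i j)) := by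
  have hmom : ∀ i i' j j' : Fin d, sigma u v (momPoly i i' j j') = momPoly i i' j j' :=
    fun i i' j j' => sigma_of_isBal hu0 hv0 (isBal_momPoly i i' j j')
  have hC : ∀ a : ℂ, sigma u v (C a : SPoly d) = C a := fun a => by
    rw [show (C a : SPoly d) = algebraMap ℂ (SPoly d) a from rfl, AlgHom.commutes]
  have hsc : ∀ p : SPoly d, sigma u v (sconj p) = sconj (sigma u v p) :=
    fun p => (sconj_sigma hcu hcv p).symm
  simp only [Fsum, map_sum, map_mul, map_sub, hmom, hC, hsc]

lemma totalDegree_Fsum_le {d t : ℕ} (ht : 2 ≤ t)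
    (ρ : Matrix (Fin d × Fin d) (Fin d × Fin d) ℂ) (q : Fin d → Fin d → SPoly d)
    (hq : ∀ i j, (q i j).totalDegree ≤ t - 2) :
    (Fsum ρ q).totalDegree ≤ 2 * t := by
  refine le_trans (MvPolynomial.totalDegree_finset_sum _ _) (Finset.sup_le fun i _ => ?_)
  refine le_trans (MvPolynomial.totalDegree_finset_sum _ _) (Finset.sup_le fun j _ => ?_)
  refine le_trans (MvPolynomial.totalDegree_finset_sum _ _) (Finset.sup_le fun i' _ => ?_)
  refine le_trans (MvPolynomial.totalDegree_finset_sum _ _) (Finset.sup_le fun j' _ => ?_)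
  refine le_trans (MvPolynomial.totalDegree_mul _ _) ?_
  have h1 := totalDegree_C_sub_mom_le (ρ (i, j) (i', j')) i i' j j'
  have h2 := MvPolynomial.totalDegree_mul (q i j) (sconj (q i' j'))
  have h3 := totalDegree_sconj_le (q i' j')
  have h4 := hq i j
  have h5 := hq i' j'
  omega

-- the monomial appearing in BalancedL
lemma xv_inj {d : ℕ} : Function.Injective (xv (d := d)) := fun a b h => by
  simpa [xv] using h
lemma xbv_inj {d : ℕ} : Function.Injective (xbv (d := d)) := fun a b h => by
  simpa [xbv] using h
lemma yv_inj {d : ℕ} : Function.Injective (yv (d := d)) := fun a b h => by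
  simpa [yv] using h
lemma ybv_inj {d : ℕ} : Function.Injective (ybv (d := d)) := fun a b h => by
  simpa [ybv] using h

lemma balanced_prod_eq_monomial {d : ℕ} (al al' be be' : Fin d → ℕ) :
    (∏ i, (X (xv i) : SPoly d) ^ al i) * (∏ i, X (xbv i) ^ al' i) *
      (∏ j, X (yv j) ^ be j) * (∏ j, X (ybv j) ^ be' j)
    = monomial ((∑ i, Finsupp.single (xv i) (al i)) + (∑ i, Finsupp.single (xbv i) (al' i))
        + (∑ j, Finsupp.single (yv j) (be j)) + (∑ j, Finsupp.single (ybv j) (be' j))) (1:ℂ) := by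
  simp only [MvPolynomial.X_pow_eq_monomial, prod_monomial, monomial_mul, one_mul]

lemma bigm_sums {d : ℕ} (al al' be be' : Fin d → ℕ) :
    (∑ i, ((∑ i'', Finsupp.single (xv i'') (al i'')) + (∑ i'', Finsupp.single (xbv i'') (al' i''))
        + (∑ j'', Finsupp.single (yv j'') (be j'')) + (∑ j'', Finsupp.single (ybv j'') (be' j''))) (xv i))
      = ∑ i, al i ∧
    (∑ i, ((∑ i'', Finsupp.single (xv i'') (al i'')) + (∑ i'', Finsupp.single (xbv i'') (al' i''))
        + (∑ j'', Finsupp.single (yv j'') (be j'')) + (∑ j'', Finsupp.single (ybv j'') (be' j''))) (xbv i))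
      = ∑ i, al' i ∧
    (∑ j, ((∑ i'', Finsupp.single (xv i'') (al i'')) + (∑ i'', Finsupp.single (xbv i'') (al' i''))
        + (∑ j'', Finsupp.single (yv j'') (be j'')) + (∑ j'', Finsupp.single (ybv j'') (be' j''))) (yv j))
      = ∑ j, be j ∧
    (∑ j, ((∑ i'', Finsupp.single (xv i'') (al i'')) + (∑ i'', Finsupp.single (xbv i'') (al' i''))
        + (∑ j'', Finsupp.single (yv j'') (be j'')) + (∑ j'', Finsupp.single (ybv j'') (be' j''))) (ybv j))
      = ∑ j, be' j := by
  refine ⟨?_, ?_, ?_, ?_⟩ <;> refine Finset.sum_congr rfl fun k _ => ?_ <;>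
    simp only [Finsupp.add_apply]
  · rw [sum_single_apply_same _ _ xv_inj,
      sum_single_apply_ne _ _ _ (fun i h => by simp [xbv, xv] at h),
      sum_single_apply_ne _ _ _ (fun i h => by simp [yv, xv] at h),
      sum_single_apply_ne _ _ _ (fun i h => by simp [ybv, xv] at h)]
    omega
  · rw [sum_single_apply_same _ _ xbv_inj,
      sum_single_apply_ne _ _ _ (fun i h => by simp [xv, xbv] at h),
      sum_single_apply_ne _ _ _ (fun i h => by simp [yv, xbv] at h),
      sum_single_apply_ne _ _ _ (fun i h => by simp [ybv, xbv] at h)]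
    omega
  · rw [sum_single_apply_same _ _ yv_inj,
      sum_single_apply_ne _ _ _ (fun i h => by simp [xv, yv] at h),
      sum_single_apply_ne _ _ _ (fun i h => by simp [xbv, yv] at h),
      sum_single_apply_ne _ _ _ (fun i h => by simp [ybv, yv] at h)]
    omega
  · rw [sum_single_apply_same _ _ ybv_inj,
      sum_single_apply_ne _ _ _ (fun i h => by simp [xv, ybv] at h),
      sum_single_apply_ne _ _ _ (fun i h => by simp [xbv, ybv] at h),
      sum_single_apply_ne _ _ _ (fun i h => by simp [yv, ybv] at h)]
    omega

/-- every feasible `L` for the order-`t` program can be replaced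
by a feasible `L̃` with the same value `L̃(1) = L(1)` vanishing on unbalanced
monomials; consequently restricting to such functionals does not change
`ξ_t^sep(ρ)`. -/
theorem stmt11 {d : ℕ} (ρ : Matrix (Fin d × Fin d) (Fin d × Fin d) ℂ)
    (hρ : ρ.IsHermitian) (t : ℕ) (ht : 2 ≤ t) :
    (∀ L : SPoly d →ₗ[ℂ] ℂ, IsFeas d t ρ L →
      ∃ L' : SPoly d →ₗ[ℂ] ℂ, IsFeas d t ρ L' ∧ L' 1 = L 1 ∧ BalancedL d L') ∧
    xiSep d t ρ =
      sInf { e | ∃ L : SPoly d →ₗ[ℂ] ℂ, IsFeas d t ρ L ∧ BalancedL d L ∧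
        e = ENNReal.ofReal (L 1).re } := by
  have main : ∀ L : SPoly d →ₗ[ℂ] ℂ, IsFeas d t ρ L →
      IsFeas d t ρ (L ∘ₗ balProj) ∧ (L ∘ₗ balProj) 1 = L 1 ∧ BalancedL d (L ∘ₗ balProj) := by
    intro L hL
    obtain ⟨hL1, hL2, hL3, hL4⟩ := hL
    have hu0 : ∀ a : ℕ, Complex.exp (2 * Real.pi * Complex.I / ((2*t+1 : ℕ) : ℂ)) ^ a ≠ 0 :=
      fun a => pow_ne_zero _ (Complex.exp_ne_zero _)
    have hcu : ∀ a : ℕ,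
        starRingEnd ℂ (Complex.exp (2 * Real.pi * Complex.I / ((2*t+1 : ℕ) : ℂ)) ^ a)
          = (Complex.exp (2 * Real.pi * Complex.I / ((2*t+1 : ℕ) : ℂ)) ^ a)⁻¹ :=
      star_zeta_pow (2*t+1)
    refine ⟨⟨?_, ?_, ?_, ?_⟩, ?_, ?_⟩
    · -- Hermitian
      intro p
      simp only [LinearMap.comp_apply]
      rw [balProj_sconj, hL1]
    · -- moments
      intro i i' j j'
      simp only [LinearMap.comp_apply]
      rw [balProj_eq_self (isBal_momPoly i i' j j')]
      exact hL2 i i' j j'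
    · -- positivity on the truncated quadratic module
      intro q hq
      obtain ⟨M, c, g, pp, hc, hg, hdeg, rfl⟩ := hq
      rw [map_sum]
      refine Finset.sum_nonneg fun s _ => ?_
      rw [← MvPolynomial.smul_eq_C_mul, map_smul, smul_eq_mul]
      refine mul_nonneg (by exact_mod_cast hc s) ?_
      rw [LinearMap.comp_apply, L_balProj_eq_sum L _ (hdeg s)]
      refine mul_nonneg (inv_sq_N_nonneg _)
        (Finset.sum_nonneg fun a _ => Finset.sum_nonneg fun b _ => ?_)
      have hbal := isBal_sloc ρ _ (hg s)
      rw [sigma_qm_term (hu0 a) (hu0 b) (hcu a) (hcu b) hbal (pp s)]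
      refine hL3 _ (qm_term_mem ρ (hg s) _ ?_)
      rw [← sigma_qm_term (hu0 a) (hu0 b) (hcu a) (hcu b) hbal (pp s)]
      exact le_trans (totalDegree_sigma_le _ _ _) (hdeg s)
    · -- second positivity condition
      intro q hq
      simp only [LinearMap.comp_apply]
      have key : L (balProj (Fsum ρ q)) = ∑ i, ∑ j, ∑ i', ∑ j',
          L (balProj ((C (ρ (i, j) (i', j')) - momPoly i i' j j') *
            (q i j * sconj (q i' j')))) := by
        simp only [Fsum, map_sum]
      rw [← key, L_balProj_eq_sum L _ (totalDegree_Fsum_le ht ρ q hq)]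
      refine mul_nonneg (inv_sq_N_nonneg _)
        (Finset.sum_nonneg fun a _ => Finset.sum_nonneg fun b _ => ?_)
      rw [sigma_Fsum (hu0 a) (hu0 b) (hcu a) (hcu b), L_Fsum]
      exact hL4 _ (fun i j => le_trans (totalDegree_sigma_le _ _ _) (hq i j))
    · -- value
      simp only [LinearMap.comp_apply]
      rw [balProj_eq_self isBal_one]
    · -- balancedness
      intro al al' be be' hneq
      simp only [LinearMap.comp_apply]
      rw [balanced_prod_eq_monomial, balProj_monomial, if_neg, map_zero]
      intro hb
      obtain ⟨B1, B2, B3, B4⟩ := bigm_sums al al' be be'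
      obtain ⟨e1, e2⟩ := hb
      rcases hneq with h | h <;> omega
  constructor
  · intro L hL
    obtain ⟨h1, h2, h3⟩ := main L hL
    exact ⟨L ∘ₗ balProj, h1, h2, h3⟩
  · have hset : { e | ∃ L : SPoly d →ₗ[ℂ] ℂ, IsFeas d t ρ L ∧
        e = ENNReal.ofReal (L 1).re }
        = { e | ∃ L : SPoly d →ₗ[ℂ] ℂ, IsFeas d t ρ L ∧ BalancedL d L ∧
        e = ENNReal.ofReal (L 1).re } := by
      ext e
      constructor
      · rintro ⟨L, hL, rfl⟩
        obtain ⟨h1, h2, h3⟩ := main L hL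
        exact ⟨L ∘ₗ balProj, h1, h3, by rw [h2]⟩
      · rintro ⟨L, hL, _, rfl⟩
        exact ⟨L, hL, rfl⟩
    rw [xiSep, hset]
end

section
/- Let k, t ≥ 1 be integers and let L be a linear functional on ℂ[x,x̄,y,ȳ]_{2k,2t} such that: (a) L((1 − ∑_{i=1}^d x_i x̄_i)·p) = 0 and L((1 − ∑_{j=1}^d y_j ȳ_j)·q) = 0 whenever the products lie in ℂ[x,x̄,y,ȳ]_{2k,2t}; (b) L(x^α x̄^{α'} y^β ȳ^{β'}) = 0 for all monomials in ℂ[x,x̄,y,ȳ]_{2k,2t} with |α| ≠ |α'| or |β| ≠ |β'|. Then L(p·p̄) ≥ 0 for every polynomial p ∈ ℂ[x,x̄,y,ȳ]_{k,t} if and only if L(σ) ≥ 0 for every σ ∈ Σ_{=2k,=2t}. -/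
open MvPolynomial ComplexOrder
open scoped ENNReal

/-- Degree in the `x,x̄` variables of a monomial exponent. -/
def degXm (d : ℕ) (e : SVar d →₀ ℕ) : ℕ := ∑ i : Fin d, (e (xv i) + e (xbv i))

/-- Degree in the `y,ȳ` variables of a monomial exponent. -/
def degYm (d : ℕ) (e : SVar d →₀ ℕ) : ℕ := ∑ j : Fin d, (e (yv j) + e (ybv j))

/-- `p ∈ ℂ[x,x̄,y,ȳ]_{k,t}`: every monomial of `p` has degree at most `k` in
`x,x̄` and at most `t` in `y,ȳ`. -/
def MemBi (d : ℕ) (p : SPoly d) (k t : ℕ) : Prop :=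
  ∀ e ∈ p.support, degXm d e ≤ k ∧ degYm d e ≤ t

/-- The cone `Σ_{=2k,=2t}`: sums `∑ p_s conj(p_s)` with `p_s ∈ ℂ[x,x̄,y,ȳ]_{k,t}`
all of whose monomials have degree exactly `2k` in `x,x̄` and exactly `2t` in
`y,ȳ`. -/
def SigEq (d k t : ℕ) : Set (SPoly d) :=
  { σ | (∃ (N : ℕ) (p : Fin N → SPoly d), (∀ s, MemBi d (p s) k t) ∧
          σ = ∑ s, p s * sconj (p s)) ∧
        ∀ e ∈ σ.support, degXm d e = 2 * k ∧ degYm d e = 2 * t }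

namespace Stmt14Aux
variable {d : ℕ}

/-! ### The bar swap on variables and exponents -/

/-- the bar swap on variables -/
def sw (d : ℕ) : SVar d → SVar d :=
  Sum.map (Sum.elim Sum.inr Sum.inl) (Sum.elim Sum.inr Sum.inl)

@[simp] lemma sw_xv (i : Fin d) : sw d (xv i) = xbv i := rfl
@[simp] lemma sw_xbv (i : Fin d) : sw d (xbv i) = xv i := rfl
@[simp] lemma sw_yv (j : Fin d) : sw d (yv j) = ybv j := rfl
@[simp] lemma sw_ybv (j : Fin d) : sw d (ybv j) = yv j := rfl

lemma sw_invol (v : SVar d) : sw d (sw d v) = v := by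
  rcases v with (i|i)|(j|j) <;> rfl

lemma sw_inj : Function.Injective (sw d) :=
  Function.Involutive.injective sw_invol

/-- counts of x, x̄, y, ȳ in an exponent -/
def Am (d : ℕ) (e : SVar d →₀ ℕ) : ℕ := ∑ i, e (xv i)
def Am' (d : ℕ) (e : SVar d →₀ ℕ) : ℕ := ∑ i, e (xbv i)
def Bm (d : ℕ) (e : SVar d →₀ ℕ) : ℕ := ∑ j, e (yv j)
def Bm' (d : ℕ) (e : SVar d →₀ ℕ) : ℕ := ∑ j, e (ybv j)

def phi (d : ℕ) (e : SVar d →₀ ℕ) : ℤ × ℤ :=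
  ((Am d e : ℤ) - Am' d e, (Bm d e : ℤ) - Bm' d e)

lemma degXm_eq (e : SVar d →₀ ℕ) : degXm d e = Am d e + Am' d e := by
  simp [degXm, Am, Am', Finset.sum_add_distrib]
lemma degYm_eq (e : SVar d →₀ ℕ) : degYm d e = Bm d e + Bm' d e := by
  simp [degYm, Bm, Bm', Finset.sum_add_distrib]

@[simp] lemma degXm_add (e f : SVar d →₀ ℕ) : degXm d (e + f) = degXm d e + degXm d f := by
  simp [degXm, Finsupp.add_apply, Finset.sum_add_distrib]; ring
@[simp] lemma degYm_add (e f : SVar d →₀ ℕ) : degYm d (e + f) = degYm d e + degYm d f := by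
  simp [degYm, Finsupp.add_apply, Finset.sum_add_distrib]; ring
@[simp] lemma Am_add (e f : SVar d →₀ ℕ) : Am d (e + f) = Am d e + Am d f := by
  simp [Am, Finsupp.add_apply, Finset.sum_add_distrib]
@[simp] lemma Am'_add (e f : SVar d →₀ ℕ) : Am' d (e + f) = Am' d e + Am' d f := by
  simp [Am', Finsupp.add_apply, Finset.sum_add_distrib]
@[simp] lemma Bm_add (e f : SVar d →₀ ℕ) : Bm d (e + f) = Bm d e + Bm d f := by
  simp [Bm, Finsupp.add_apply, Finset.sum_add_distrib]
@[simp] lemma Bm'_add (e f : SVar d →₀ ℕ) : Bm' d (e + f) = Bm' d e + Bm' d f := by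
  simp [Bm', Finsupp.add_apply, Finset.sum_add_distrib]

/-- the swap on exponents -/
noncomputable def swE (d : ℕ) (e : SVar d →₀ ℕ) : SVar d →₀ ℕ := Finsupp.mapDomain (sw d) e

@[simp] lemma swE_apply (e : SVar d →₀ ℕ) (v : SVar d) : swE d e v = e (sw d v) := by
  have : swE d e (sw d (sw d v)) = e (sw d v) := Finsupp.mapDomain_apply sw_inj e (sw d v)
  rwa [sw_invol] at this

@[simp] lemma Am_swE (e : SVar d →₀ ℕ) : Am d (swE d e) = Am' d e := by simp [Am, Am']
@[simp] lemma Am'_swE (e : SVar d →₀ ℕ) : Am' d (swE d e) = Am d e := by simp [Am, Am']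
@[simp] lemma Bm_swE (e : SVar d →₀ ℕ) : Bm d (swE d e) = Bm' d e := by simp [Bm, Bm']
@[simp] lemma Bm'_swE (e : SVar d →₀ ℕ) : Bm' d (swE d e) = Bm d e := by simp [Bm, Bm']
@[simp] lemma degXm_swE (e : SVar d →₀ ℕ) : degXm d (swE d e) = degXm d e := by
  simp [degXm_eq]; ring
@[simp] lemma degYm_swE (e : SVar d →₀ ℕ) : degYm d (swE d e) = degYm d e := by
  simp [degYm_eq]; ring

/-! ### `sconj` basics -/

lemma sconj_monomial (e : SVar d →₀ ℕ) (a : ℂ) :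
    sconj (monomial e a) = monomial (swE d e) (starRingEnd ℂ a) := by
  simp [sconj, swE, sw, MvPolynomial.map_monomial, MvPolynomial.rename_monomial]

lemma sconj_mul (p q : SPoly d) : sconj (p * q) = sconj p * sconj q := by
  simp [sconj, map_mul]

lemma sconj_sum {ι : Type*} (s : Finset ι) (f : ι → SPoly d) :
    sconj (∑ i ∈ s, f i) = ∑ i ∈ s, sconj (f i) := by
  simp [sconj, map_sum]

lemma sconj_X (v : SVar d) : sconj (X v : SPoly d) = X (sw d v) := by
  simp [sconj, sw]

/-! ### The sphere polynomials -/

noncomputable def Sx (d : ℕ) : SPoly d := ∑ i, X (xv i) * X (xbv i)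
noncomputable def Sy (d : ℕ) : SPoly d := ∑ j, X (yv j) * X (ybv j)

lemma sconj_Sx : sconj (Sx d) = Sx d := by
  rw [Sx, sconj_sum]
  simp only [sconj_mul, sconj_X, sw_xv, sw_xbv]
  exact Finset.sum_congr rfl fun i _ => mul_comm _ _

lemma sconj_Sy : sconj (Sy d) = Sy d := by
  rw [Sy, sconj_sum]
  simp only [sconj_mul, sconj_X, sw_yv, sw_ybv]
  exact Finset.sum_congr rfl fun j _ => mul_comm _ _

lemma X_mul_X (a b : SVar d) :
    (X a : SPoly d) * X b = monomial (Finsupp.single a 1 + Finsupp.single b 1) 1 := by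
  rw [MvPolynomial.X, MvPolynomial.X, monomial_mul, mul_one]

@[simp] lemma xv_inj (i i' : Fin d) : xv i = xv i' ↔ i = i' := by simp [xv]
@[simp] lemma xbv_inj (i i' : Fin d) : xbv i = xbv i' ↔ i = i' := by simp [xbv]
@[simp] lemma yv_inj (i i' : Fin d) : yv i = yv i' ↔ i = i' := by simp [yv]
@[simp] lemma ybv_inj (i i' : Fin d) : ybv i = ybv i' ↔ i = i' := by simp [ybv]
@[simp] lemma xv_ne_xbv (i i' : Fin d) : xv i ≠ xbv i' := by simp [xv, xbv]
@[simp] lemma xbv_ne_xv (i i' : Fin d) : xbv i ≠ xv i' := by simp [xv, xbv]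
@[simp] lemma xv_ne_yv (i i' : Fin d) : xv i ≠ yv i' := by simp [xv, yv]
@[simp] lemma xv_ne_ybv (i i' : Fin d) : xv i ≠ ybv i' := by simp [xv, ybv]
@[simp] lemma xbv_ne_yv (i i' : Fin d) : xbv i ≠ yv i' := by simp [xbv, yv]
@[simp] lemma xbv_ne_ybv (i i' : Fin d) : xbv i ≠ ybv i' := by simp [xbv, ybv]
@[simp] lemma yv_ne_ybv (i i' : Fin d) : yv i ≠ ybv i' := by simp [yv, ybv]
@[simp] lemma ybv_ne_yv (i i' : Fin d) : ybv i ≠ yv i' := by simp [yv, ybv]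
@[simp] lemma yv_ne_xv (i i' : Fin d) : yv i ≠ xv i' := by simp [xv, yv]
@[simp] lemma yv_ne_xbv (i i' : Fin d) : yv i ≠ xbv i' := by simp [xbv, yv]
@[simp] lemma ybv_ne_xv (i i' : Fin d) : ybv i ≠ xv i' := by simp [xv, ybv]
@[simp] lemma ybv_ne_xbv (i i' : Fin d) : ybv i ≠ xbv i' := by simp [xbv, ybv]

noncomputable def sxi (d : ℕ) (i : Fin d) : SVar d →₀ ℕ :=
  Finsupp.single (xv i) 1 + Finsupp.single (xbv i) 1
noncomputable def syj (d : ℕ) (j : Fin d) : SVar d →₀ ℕ :=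
  Finsupp.single (yv j) 1 + Finsupp.single (ybv j) 1

@[simp] lemma degXm_sxi (i : Fin d) : degXm d (sxi d i) = 2 := by
  simp [degXm, sxi, Finsupp.single_apply, Finset.sum_add_distrib]
@[simp] lemma degYm_sxi (i : Fin d) : degYm d (sxi d i) = 0 := by
  simp [degYm, sxi, Finsupp.single_apply]
@[simp] lemma degXm_syj (j : Fin d) : degXm d (syj d j) = 0 := by
  simp [degXm, syj, Finsupp.single_apply]
@[simp] lemma degYm_syj (j : Fin d) : degYm d (syj d j) = 2 := by
  simp [degYm, syj, Finsupp.single_apply, Finset.sum_add_distrib]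

lemma Sx_eq : Sx d = ∑ i, monomial (sxi d i) 1 := by
  simp [Sx, X_mul_X, sxi]
lemma Sy_eq : Sy d = ∑ j, monomial (syj d j) 1 := by
  simp [Sy, X_mul_X, syj]

lemma mem_support_Sx (e : SVar d →₀ ℕ) (he : e ∈ (Sx d).support) : ∃ i, e = sxi d i := by
  by_contra h
  push_neg at h
  have : coeff e (Sx d) = 0 := by
    rw [Sx_eq, coeff_sum]
    refine Finset.sum_eq_zero fun i _ => ?_
    rw [coeff_monomial, if_neg]
    exact fun hh => h i (hh ▸ rfl)
  simp [MvPolynomial.mem_support_iff] at he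
  exact he this

lemma mem_support_Sy (e : SVar d →₀ ℕ) (he : e ∈ (Sy d).support) : ∃ j, e = syj d j := by
  by_contra h
  push_neg at h
  have : coeff e (Sy d) = 0 := by
    rw [Sy_eq, coeff_sum]
    refine Finset.sum_eq_zero fun j _ => ?_
    rw [coeff_monomial, if_neg]
    exact fun hh => h j (hh ▸ rfl)
  simp [MvPolynomial.mem_support_iff] at he
  exact he this

lemma mem_support_mul (f g : SPoly d) (e : SVar d →₀ ℕ) (he : e ∈ (f * g).support) :
    ∃ e1 ∈ f.support, ∃ e2 ∈ g.support, e = e1 + e2 := by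
  have := MvPolynomial.support_mul f g he
  rw [Finset.mem_add] at this
  obtain ⟨a, ha, b, hb, hab⟩ := this
  exact ⟨a, ha, b, hb, hab.symm⟩

lemma support_Sx_pow (a : ℕ) (e : SVar d →₀ ℕ) (he : e ∈ ((Sx d) ^ a).support) :
    degXm d e = 2 * a ∧ degYm d e = 0 := by
  induction a generalizing e with
  | zero =>
    simp only [pow_zero] at he
    have : e = 0 := by
      by_contra h
      have : coeff e (1 : SPoly d) = 0 := by rw [coeff_one, if_neg (by exact fun hh => h hh.symm)]
      simp [MvPolynomial.mem_support_iff] at he; exact h he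
    subst this; simp [degXm, degYm]
  | succ a ih =>
    rw [pow_succ] at he
    obtain ⟨e1, h1, e2, h2, rfl⟩ := mem_support_mul _ _ _ he
    obtain ⟨hx, hy⟩ := ih e1 h1
    obtain ⟨i, rfl⟩ := mem_support_Sx e2 h2
    simp [hx, hy]; ring

lemma support_Sy_pow (b : ℕ) (e : SVar d →₀ ℕ) (he : e ∈ ((Sy d) ^ b).support) :
    degXm d e = 0 ∧ degYm d e = 2 * b := by
  induction b generalizing e with
  | zero =>
    simp only [pow_zero] at he
    have : e = 0 := by
      by_contra h
      have : coeff e (1 : SPoly d) = 0 := by rw [coeff_one, if_neg (by exact fun hh => h hh.symm)]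
      simp [MvPolynomial.mem_support_iff] at he; exact h he
    subst this; simp [degXm, degYm]
  | succ b ih =>
    rw [pow_succ] at he
    obtain ⟨e1, h1, e2, h2, rfl⟩ := mem_support_mul _ _ _ he
    obtain ⟨hx, hy⟩ := ih e1 h1
    obtain ⟨j, rfl⟩ := mem_support_Sy e2 h2
    simp [hx, hy]; ring

lemma monomial_eq_prod (E : SVar d →₀ ℕ) :
    (monomial E (1:ℂ) : SPoly d) =
      (∏ i, X (xv i) ^ E (xv i)) * (∏ i, X (xbv i) ^ E (xbv i)) *
      (∏ j, X (yv j) ^ E (yv j)) * (∏ j, X (ybv j) ^ E (ybv j)) := by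
  rw [monomial_eq, C_1, one_mul,
    Finsupp.prod_fintype _ _ (fun v => pow_zero (X v : SPoly d)),
    Fintype.prod_sum_type]
  rw [Fintype.prod_sum_type, Fintype.prod_sum_type]
  simp only [xv, xbv, yv, ybv, mul_assoc]

end Stmt14Aux
namespace Stmt14Aux
variable {d : ℕ} {k t : ℕ} {L : SPoly d →ₗ[ℂ] ℂ}

/-! ### L vanishes on unbalanced monomials -/

lemma L_monomial_vanish
    (hbal : ∀ al al' be be' : Fin d → ℕ,
      (∑ i, (al i + al' i)) ≤ 2 * k → (∑ j, (be j + be' j)) ≤ 2 * t →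
      ((∑ i, al i) ≠ (∑ i, al' i) ∨ (∑ j, be j) ≠ (∑ j, be' j)) →
      L ((∏ i, X (xv i) ^ al i) * (∏ i, X (xbv i) ^ al' i) *
          (∏ j, X (yv j) ^ be j) * (∏ j, X (ybv j) ^ be' j)) = 0)
    (E : SVar d →₀ ℕ) (a : ℂ)
    (hx : degXm d E ≤ 2 * k) (hy : degYm d E ≤ 2 * t)
    (hun : Am d E ≠ Am' d E ∨ Bm d E ≠ Bm' d E) :
    L (monomial E a) = 0 := by
  have h0 := hbal (fun i => E (xv i)) (fun i => E (xbv i)) (fun j => E (yv j)) (fun j => E (ybv j))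
    hx hy hun
  rw [← monomial_eq_prod] at h0
  have : (monomial E a : SPoly d) = a • monomial E 1 := by
    rw [← map_smul (monomial E), smul_eq_mul, mul_one]
  rw [this, map_smul, h0, smul_zero]

lemma L_vanish_poly
    (hbal : ∀ al al' be be' : Fin d → ℕ,
      (∑ i, (al i + al' i)) ≤ 2 * k → (∑ j, (be j + be' j)) ≤ 2 * t →
      ((∑ i, al i) ≠ (∑ i, al' i) ∨ (∑ j, be j) ≠ (∑ j, be' j)) →
      L ((∏ i, X (xv i) ^ al i) * (∏ i, X (xbv i) ^ al' i) *
          (∏ j, X (yv j) ^ be j) * (∏ j, X (ybv j) ^ be' j)) = 0)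
    (f : SPoly d)
    (hf : ∀ e ∈ f.support, degXm d e ≤ 2 * k ∧ degYm d e ≤ 2 * t ∧
      (Am d e ≠ Am' d e ∨ Bm d e ≠ Bm' d e)) :
    L f = 0 := by
  conv_lhs => rw [← support_sum_monomial_coeff f]
  rw [map_sum]
  refine Finset.sum_eq_zero fun e he => ?_
  obtain ⟨h1, h2, h3⟩ := hf e he
  exact L_monomial_vanish hbal e _ h1 h2 h3

/-! ### shift lemmas -/

lemma shift1x
    (hidx : ∀ p : SPoly d,
      MemBi d (((1 : SPoly d) - ∑ i, X (xv i) * X (xbv i)) * p) (2 * k) (2 * t) →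
      L (((1 : SPoly d) - ∑ i, X (xv i) * X (xbv i)) * p) = 0)
    (f : SPoly d)
    (hf : ∀ e ∈ f.support, degXm d e + 2 ≤ 2 * k ∧ degYm d e ≤ 2 * t) :
    L f = L (Sx d * f) := by
  have hrw : ((1 : SPoly d) - ∑ i, X (xv i) * X (xbv i)) * f = f - Sx d * f := by
    rw [Sx]; ring
  have hm : MemBi d (((1 : SPoly d) - ∑ i, X (xv i) * X (xbv i)) * f) (2 * k) (2 * t) := by
    intro e he
    rw [hrw] at he
    rcases Finset.mem_union.mp (MvPolynomial.support_sub _ _ _ he) with h | h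
    · obtain ⟨h1, h2⟩ := hf e h
      exact ⟨by omega, h2⟩
    · obtain ⟨e1, h1, e2, h2, rfl⟩ := mem_support_mul _ _ _ h
      obtain ⟨i, rfl⟩ := mem_support_Sx e1 h1
      obtain ⟨h1', h2'⟩ := hf e2 h2
      constructor
      · simp only [degXm_add, degXm_sxi]; omega
      · simp only [degYm_add, degYm_sxi]; omega
  have h0 := hidx f hm
  rw [hrw, map_sub, sub_eq_zero] at h0
  exact h0

lemma shift1y
    (hidy : ∀ p : SPoly d,
      MemBi d (((1 : SPoly d) - ∑ j, X (yv j) * X (ybv j)) * p) (2 * k) (2 * t) →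
      L (((1 : SPoly d) - ∑ j, X (yv j) * X (ybv j)) * p) = 0)
    (f : SPoly d)
    (hf : ∀ e ∈ f.support, degXm d e ≤ 2 * k ∧ degYm d e + 2 ≤ 2 * t) :
    L f = L (Sy d * f) := by
  have hrw : ((1 : SPoly d) - ∑ j, X (yv j) * X (ybv j)) * f = f - Sy d * f := by
    rw [Sy]; ring
  have hm : MemBi d (((1 : SPoly d) - ∑ j, X (yv j) * X (ybv j)) * f) (2 * k) (2 * t) := by
    intro e he
    rw [hrw] at he
    rcases Finset.mem_union.mp (MvPolynomial.support_sub _ _ _ he) with h | h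
    · obtain ⟨h1, h2⟩ := hf e h
      exact ⟨h1, by omega⟩
    · obtain ⟨e1, h1, e2, h2, rfl⟩ := mem_support_mul _ _ _ h
      obtain ⟨j, rfl⟩ := mem_support_Sy e1 h1
      obtain ⟨h1', h2'⟩ := hf e2 h2
      constructor
      · simp only [degXm_add, degXm_syj]; omega
      · simp only [degYm_add, degYm_syj]; omega
  have h0 := hidy f hm
  rw [hrw, map_sub, sub_eq_zero] at h0
  exact h0

lemma shift_pow_x
    (hidx : ∀ p : SPoly d,
      MemBi d (((1 : SPoly d) - ∑ i, X (xv i) * X (xbv i)) * p) (2 * k) (2 * t) →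
      L (((1 : SPoly d) - ∑ i, X (xv i) * X (xbv i)) * p) = 0)
    (a : ℕ) (f : SPoly d)
    (hf : ∀ e ∈ f.support, degXm d e + 2 * a ≤ 2 * k ∧ degYm d e ≤ 2 * t) :
    L f = L (Sx d ^ a * f) := by
  induction a generalizing f with
  | zero => rw [pow_zero, one_mul]
  | succ a ih =>
    have h1 : L f = L (Sx d * f) := shift1x hidx f fun e he => by
      obtain ⟨hx, hy⟩ := hf e he; exact ⟨by omega, hy⟩
    have h2 : L (Sx d * f) = L (Sx d ^ a * (Sx d * f)) := by
      refine ih (Sx d * f) fun e he => ?_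
      obtain ⟨e1, he1, e2, he2, rfl⟩ := mem_support_mul _ _ _ he
      obtain ⟨i, rfl⟩ := mem_support_Sx e1 he1
      obtain ⟨hx, hy⟩ := hf e2 he2
      constructor
      · simp only [degXm_add, degXm_sxi]; omega
      · simp only [degYm_add, degYm_sxi]; omega
    rw [h1, h2]
    congr 1
    rw [pow_succ]; ring

lemma shift_pow_y
    (hidy : ∀ p : SPoly d,
      MemBi d (((1 : SPoly d) - ∑ j, X (yv j) * X (ybv j)) * p) (2 * k) (2 * t) →
      L (((1 : SPoly d) - ∑ j, X (yv j) * X (ybv j)) * p) = 0)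
    (b : ℕ) (f : SPoly d)
    (hf : ∀ e ∈ f.support, degXm d e ≤ 2 * k ∧ degYm d e + 2 * b ≤ 2 * t) :
    L f = L (Sy d ^ b * f) := by
  induction b generalizing f with
  | zero => rw [pow_zero, one_mul]
  | succ b ih =>
    have h1 : L f = L (Sy d * f) := shift1y hidy f fun e he => by
      obtain ⟨hx, hy⟩ := hf e he; exact ⟨hx, by omega⟩
    have h2 : L (Sy d * f) = L (Sy d ^ b * (Sy d * f)) := by
      refine ih (Sy d * f) fun e he => ?_
      obtain ⟨e1, he1, e2, he2, rfl⟩ := mem_support_mul _ _ _ he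
      obtain ⟨j, rfl⟩ := mem_support_Sy e1 he1
      obtain ⟨hx, hy⟩ := hf e2 he2
      constructor
      · simp only [degXm_add, degXm_syj]; omega
      · simp only [degYm_add, degYm_syj]; omega
    rw [h1, h2]
    congr 1
    rw [pow_succ]; ring

lemma shift_pow
    (hidx : ∀ p : SPoly d,
      MemBi d (((1 : SPoly d) - ∑ i, X (xv i) * X (xbv i)) * p) (2 * k) (2 * t) →
      L (((1 : SPoly d) - ∑ i, X (xv i) * X (xbv i)) * p) = 0)
    (hidy : ∀ p : SPoly d,
      MemBi d (((1 : SPoly d) - ∑ j, X (yv j) * X (ybv j)) * p) (2 * k) (2 * t) →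
      L (((1 : SPoly d) - ∑ j, X (yv j) * X (ybv j)) * p) = 0)
    (a b : ℕ) (f : SPoly d)
    (hf : ∀ e ∈ f.support, degXm d e + 2 * a ≤ 2 * k ∧ degYm d e + 2 * b ≤ 2 * t) :
    L f = L (Sx d ^ a * Sy d ^ b * f) := by
  have h1 : L f = L (Sx d ^ a * f) := shift_pow_x hidx a f fun e he => by
    obtain ⟨hx, hy⟩ := hf e he; exact ⟨hx, by omega⟩
  have h2 : L (Sx d ^ a * f) = L (Sy d ^ b * (Sx d ^ a * f)) := by
    refine shift_pow_y hidy b (Sx d ^ a * f) fun e he => ?_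
    obtain ⟨e1, he1, e2, he2, rfl⟩ := mem_support_mul _ _ _ he
    obtain ⟨hx1, hy1⟩ := support_Sx_pow a e1 he1
    obtain ⟨hx, hy⟩ := hf e2 he2
    constructor
    · simp only [degXm_add]; omega
    · simp only [degYm_add]; omega
  rw [h1, h2]
  congr 1
  ring

end Stmt14Aux
namespace Stmt14Aux
variable {d : ℕ} {k t : ℕ} {L : SPoly d →ₗ[ℂ] ℂ}

lemma sconj_pow (p : SPoly d) (n : ℕ) : sconj (p ^ n) = sconj p ^ n := by
  simp [sconj, map_pow]

lemma mem_support_monomial (E F : SVar d →₀ ℕ) (a : ℂ) (h : F ∈ (monomial E a).support) :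
    F = E := by
  by_cases ha : a = 0
  · simp [support_monomial, ha] at h
  · simpa [support_monomial, ha] using h

@[simp] lemma degXm_single_xv (i : Fin d) : degXm d (Finsupp.single (xv i) 1) = 1 := by
  simp [degXm, Finsupp.single_apply]
@[simp] lemma degYm_single_xv (i : Fin d) : degYm d (Finsupp.single (xv i) 1) = 0 := by
  simp [degYm, Finsupp.single_apply]
@[simp] lemma degXm_single_yv (j : Fin d) : degXm d (Finsupp.single (yv j) 1) = 0 := by
  simp [degXm, Finsupp.single_apply]
@[simp] lemma degYm_single_yv (j : Fin d) : degYm d (Finsupp.single (yv j) 1) = 1 := by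
  simp [degYm, Finsupp.single_apply]

lemma sigEq_intro {ι : Type} [Fintype ι] (σ : SPoly d) (p : ι → SPoly d)
    (hp : ∀ s, MemBi d (p s) k t) (hσ : σ = ∑ s, p s * sconj (p s))
    (hsupp : ∀ e ∈ σ.support, degXm d e = 2 * k ∧ degYm d e = 2 * t) :
    σ ∈ SigEq d k t := by
  refine ⟨⟨Fintype.card ι, fun n => p ((Fintype.equivFin ι).symm n), fun n => hp _, ?_⟩, hsupp⟩
  rw [hσ]
  exact Fintype.sum_equiv (Fintype.equivFin ι) _ _ (fun s => by simp)

lemma sq_sum_x (f : SPoly d) :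
    Sx d * (f * sconj f) = ∑ i, (X (xv i) * f) * sconj (X (xv i) * f) := by
  rw [Sx, Finset.sum_mul]
  refine Finset.sum_congr rfl fun i _ => ?_
  rw [sconj_mul, sconj_X, sw_xv]; ring

lemma sq_sum_y (f : SPoly d) :
    Sy d * (f * sconj f) = ∑ j, (X (yv j) * f) * sconj (X (yv j) * f) := by
  rw [Sy, Finset.sum_mul]
  refine Finset.sum_congr rfl fun j _ => ?_
  rw [sconj_mul, sconj_X, sw_yv]; ring

lemma sq_sum_xy (f : SPoly d) :
    Sx d * Sy d * (f * sconj f) =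
      ∑ i, ∑ j, (X (xv i) * X (yv j) * f) * sconj (X (xv i) * X (yv j) * f) := by
  rw [Sx, Sy, Finset.sum_mul_sum, Finset.sum_mul]
  refine Finset.sum_congr rfl fun i _ => ?_
  rw [Finset.sum_mul]
  refine Finset.sum_congr rfl fun j _ => ?_
  rw [sconj_mul, sconj_mul, sconj_X, sconj_X, sw_xv, sw_yv]; ring

set_option maxHeartbeats 1000000 in
lemma class_nonneg (hk : 1 ≤ k) (ht : 1 ≤ t)
    (hidx : ∀ p : SPoly d,
      MemBi d (((1 : SPoly d) - ∑ i, X (xv i) * X (xbv i)) * p) (2 * k) (2 * t) →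
      L (((1 : SPoly d) - ∑ i, X (xv i) * X (xbv i)) * p) = 0)
    (hidy : ∀ p : SPoly d,
      MemBi d (((1 : SPoly d) - ∑ j, X (yv j) * X (ybv j)) * p) (2 * k) (2 * t) →
      L (((1 : SPoly d) - ∑ j, X (yv j) * X (ybv j)) * p) = 0)
    (hsig : ∀ σ ∈ SigEq d k t, 0 ≤ L σ)
    (q : SPoly d) (c : ℤ × ℤ)
    (hq : ∀ e ∈ q.support, (degXm d e ≤ k ∧ degYm d e ≤ t) ∧ phi d e = c) :
    0 ≤ L (q * sconj q) := by
  rcases Finset.eq_empty_or_nonempty q.support with hS | ⟨e₀, he₀⟩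
  · have h0 : q = 0 := by rwa [← MvPolynomial.support_eq_empty]
    rw [h0]
    simp only [zero_mul, map_zero]
    exact le_refl _
  set m₀ := degXm d e₀ with hm₀
  set n₀ := degYm d e₀ with hn₀
  have hm₀k : m₀ ≤ k := (hq e₀ he₀).1.1
  have hn₀t : n₀ ≤ t := (hq e₀ he₀).1.2
  have hpar : ∀ e ∈ q.support, degXm d e % 2 = m₀ % 2 ∧ degYm d e % 2 = n₀ % 2 := by
    intro e he
    have h1 := (hq e he).2
    have h2 := (hq e₀ he₀).2
    rw [← h2] at h1
    have hx1 : (Am d e : ℤ) - Am' d e = Am d e₀ - Am' d e₀ := congrArg Prod.fst h1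
    have hy1 : (Bm d e : ℤ) - Bm' d e = Bm d e₀ - Bm' d e₀ := congrArg Prod.snd h1
    have ha := degXm_eq e
    have hb := degXm_eq e₀
    have hc' := degYm_eq e
    have hd' := degYm_eq e₀
    constructor <;> omega
  set jx : (SVar d →₀ ℕ) → ℕ := fun e => (k - degXm d e) / 2 with hjx
  set jy : (SVar d →₀ ℕ) → ℕ := fun e => (t - degYm d e) / 2 with hjy
  set kx := k - (k - m₀) % 2 with hkxdef
  set ty := t - (t - n₀) % 2 with htydef
  have hkxle : kx ≤ k := by omega
  have htyle : ty ≤ t := by omega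
  have hkx : ∀ e ∈ q.support, degXm d e + 2 * jx e = kx := by
    intro e he
    have h1 := (hq e he).1.1
    have h2 := (hpar e he).1
    simp only [hjx]
    omega
  have hty : ∀ e ∈ q.support, degYm d e + 2 * jy e = ty := by
    intro e he
    have h1 := (hq e he).1.2
    have h2 := (hpar e he).2
    simp only [hjy]
    omega
  set qhat : SPoly d :=
    ∑ e ∈ q.support, monomial e (coeff e q) * Sx d ^ jx e * Sy d ^ jy e with hqhat
  have hexp1 : q * sconj q = ∑ e ∈ q.support, ∑ e' ∈ q.support,
      monomial (e + swE d e') (coeff e q * (starRingEnd ℂ) (coeff e' q)) := by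
    conv_lhs => rw [← support_sum_monomial_coeff q]
    rw [sconj_sum, Finset.sum_mul_sum]
    exact Finset.sum_congr rfl fun e _ => Finset.sum_congr rfl fun e' _ => by
      rw [sconj_monomial, monomial_mul]
  have hexp2 : qhat * sconj qhat = ∑ e ∈ q.support, ∑ e' ∈ q.support,
      Sx d ^ (jx e + jx e') * Sy d ^ (jy e + jy e') *
        monomial (e + swE d e') (coeff e q * (starRingEnd ℂ) (coeff e' q)) := by
    rw [hqhat, sconj_sum, Finset.sum_mul_sum]
    refine Finset.sum_congr rfl fun e _ => Finset.sum_congr rfl fun e' _ => ?_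
    rw [sconj_mul, sconj_mul, sconj_monomial, sconj_pow, sconj_pow, sconj_Sx, sconj_Sy,
      pow_add, pow_add, ← monomial_mul]
    ring
  have hLeq : L (q * sconj q) = L (qhat * sconj qhat) := by
    rw [hexp1, hexp2, map_sum, map_sum]
    refine Finset.sum_congr rfl fun e he => ?_
    rw [map_sum, map_sum]
    refine Finset.sum_congr rfl fun e' he' => ?_
    refine shift_pow hidx hidy _ _ _ fun E hE => ?_
    have hEe : E = e + swE d e' := mem_support_monomial _ _ _ hE
    subst hEe
    have h1 := hkx e he
    have h2 := hkx e' he'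
    have h3 := hty e he
    have h4 := hty e' he'
    simp only [degXm_add, degYm_add, degXm_swE, degYm_swE]
    omega
  have hhom : ∀ E ∈ (qhat * sconj qhat).support,
      degXm d E = 2 * kx ∧ degYm d E = 2 * ty := by
    intro E hE
    rw [hexp2] at hE
    obtain ⟨e, he, h2⟩ := Finset.mem_biUnion.mp (MvPolynomial.support_sum hE)
    obtain ⟨e', he', hE'⟩ := Finset.mem_biUnion.mp (MvPolynomial.support_sum h2)
    obtain ⟨E1, hE1, E23, hE23, rfl⟩ := mem_support_mul _ _ _ hE'
    obtain ⟨E1a, hE1a, E1b, hE1b, rfl⟩ := mem_support_mul _ _ _ hE1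
    have hx1 := support_Sx_pow _ _ hE1a
    have hy1 := support_Sy_pow _ _ hE1b
    have hEe : E23 = e + swE d e' := mem_support_monomial _ _ _ hE23
    subst hEe
    have h1 := hkx e he
    have h2' := hkx e' he'
    have h3 := hty e he
    have h4 := hty e' he'
    simp only [degXm_add, degYm_add, degXm_swE, degYm_swE, hx1.1, hx1.2, hy1.1, hy1.2]
    omega
  set ex := k - kx with hexdef
  set ey := t - ty with heydef
  have hfin : L (qhat * sconj qhat) = L (Sx d ^ ex * Sy d ^ ey * (qhat * sconj qhat)) :=
    shift_pow hidx hidy ex ey _ fun E hE => by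
      have := hhom E hE; omega
  have hqhatsupp : ∀ E ∈ qhat.support, degXm d E = kx ∧ degYm d E = ty := by
    intro E hE
    rw [hqhat] at hE
    obtain ⟨e, he, hE'⟩ := Finset.mem_biUnion.mp (MvPolynomial.support_sum hE)
    obtain ⟨E1, hE1, E2, hE2, rfl⟩ := mem_support_mul _ _ _ hE'
    obtain ⟨E1a, hE1a, E1b, hE1b, rfl⟩ := mem_support_mul _ _ _ hE1
    have hEe : E1a = e := mem_support_monomial _ _ _ hE1a
    subst hEe
    have hx1 := support_Sx_pow _ _ hE1b
    have hy1 := support_Sy_pow _ _ hE2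
    have h1 := hkx E1a he
    have h2 := hty E1a he
    simp only [degXm_add, degYm_add, hx1.1, hx1.2, hy1.1, hy1.2]
    omega
  have hmemqhat : MemBi d qhat k t := fun E hE =>
    ⟨(hqhatsupp E hE).1 ▸ hkxle, (hqhatsupp E hE).2 ▸ htyle⟩
  have hσsupp : ∀ E ∈ (Sx d ^ ex * Sy d ^ ey * (qhat * sconj qhat)).support,
      degXm d E = 2 * k ∧ degYm d E = 2 * t := by
    intro E hE
    obtain ⟨E1, hE1, E2, hE2, rfl⟩ := mem_support_mul _ _ _ hE
    obtain ⟨E1a, hE1a, E1b, hE1b, rfl⟩ := mem_support_mul _ _ _ hE1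
    have hx1 := support_Sx_pow _ _ hE1a
    have hy1 := support_Sy_pow _ _ hE1b
    have h2 := hhom E2 hE2
    simp only [degXm_add, degYm_add, hx1.1, hx1.2, hy1.1, hy1.2, h2.1, h2.2]
    omega
  have hex01 : ex = 0 ∨ ex = 1 := by omega
  have hey01 : ey = 0 ∨ ey = 1 := by omega
  have hmem : Sx d ^ ex * Sy d ^ ey * (qhat * sconj qhat) ∈ SigEq d k t := by
    rcases hex01 with hex | hex <;> rcases hey01 with hey | hey
    · refine sigEq_intro _ (fun _ : Unit => qhat) (fun _ => hmemqhat) ?_ hσsupp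
      rw [hex, hey]; simp
    · refine sigEq_intro _ (fun j : Fin d => X (yv j) * qhat) ?_ ?_ hσsupp
      · intro j E hE
        obtain ⟨E1, hE1, E2, hE2, rfl⟩ := mem_support_mul _ _ _ hE
        have hE1y : E1 = Finsupp.single (yv j) 1 := mem_support_monomial _ _ _ (by
          rwa [MvPolynomial.X] at hE1)
        subst hE1y
        have h2 := hqhatsupp E2 hE2
        constructor
        · simp only [degXm_add, degXm_single_yv, h2.1]; omega
        · simp only [degYm_add, degYm_single_yv, h2.2]; omega
      · rw [hex, hey, pow_zero, pow_one, one_mul]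
        exact sq_sum_y qhat
    · refine sigEq_intro _ (fun i : Fin d => X (xv i) * qhat) ?_ ?_ hσsupp
      · intro i E hE
        obtain ⟨E1, hE1, E2, hE2, rfl⟩ := mem_support_mul _ _ _ hE
        have hE1x : E1 = Finsupp.single (xv i) 1 := mem_support_monomial _ _ _ (by
          rwa [MvPolynomial.X] at hE1)
        subst hE1x
        have h2 := hqhatsupp E2 hE2
        constructor
        · simp only [degXm_add, degXm_single_xv, h2.1]; omega
        · simp only [degYm_add, degYm_single_xv, h2.2]; omega
      · rw [hex, hey, pow_zero, pow_one, mul_one]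
        exact sq_sum_x qhat
    · refine sigEq_intro _ (fun ij : Fin d × Fin d => X (xv ij.1) * X (yv ij.2) * qhat) ?_ ?_
        hσsupp
      · intro ij E hE
        obtain ⟨E1, hE1, E2, hE2, rfl⟩ := mem_support_mul _ _ _ hE
        obtain ⟨E1a, hE1a, E1b, hE1b, rfl⟩ := mem_support_mul _ _ _ hE1
        have hE1x : E1a = Finsupp.single (xv ij.1) 1 := mem_support_monomial _ _ _ (by
          rwa [MvPolynomial.X] at hE1a)
        have hE1y : E1b = Finsupp.single (yv ij.2) 1 := mem_support_monomial _ _ _ (by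
          rwa [MvPolynomial.X] at hE1b)
        subst hE1x; subst hE1y
        have h2 := hqhatsupp E2 hE2
        constructor
        · simp only [degXm_add, degXm_single_xv, degXm_single_yv, h2.1]; omega
        · simp only [degYm_add, degYm_single_xv, degYm_single_yv, h2.2]; omega
      · rw [hex, hey, pow_one, pow_one, Fintype.sum_prod_type]
        exact sq_sum_xy qhat
  have h0 := hsig _ hmem
  rw [hLeq, hfin]
  exact h0

end Stmt14Aux
namespace Stmt14Aux
variable {d : ℕ}

lemma phi_fst (e : SVar d →₀ ℕ) : (phi d e).1 = (Am d e : ℤ) - Am' d e := rfl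
lemma phi_snd (e : SVar d →₀ ℕ) : (phi d e).2 = (Bm d e : ℤ) - Bm' d e := rfl

end Stmt14Aux
/-- for `L` vanishing on the truncated bi-sphere ideal and on
unbalanced monomials, positivity on all Hermitian squares `p·conj p` with
`p ∈ ℂ[x,x̄,y,ȳ]_{k,t}` is equivalent to positivity on `Σ_{=2k,=2t}`. -/
theorem stmt14 {d : ℕ} (k t : ℕ) (hk : 1 ≤ k) (ht : 1 ≤ t)
    (L : SPoly d →ₗ[ℂ] ℂ)
    (hidx : ∀ p : SPoly d,
      MemBi d (((1 : SPoly d) - ∑ i, X (xv i) * X (xbv i)) * p) (2 * k) (2 * t) →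
      L (((1 : SPoly d) - ∑ i, X (xv i) * X (xbv i)) * p) = 0)
    (hidy : ∀ q : SPoly d,
      MemBi d (((1 : SPoly d) - ∑ j, X (yv j) * X (ybv j)) * q) (2 * k) (2 * t) →
      L (((1 : SPoly d) - ∑ j, X (yv j) * X (ybv j)) * q) = 0)
    (hbal : ∀ al al' be be' : Fin d → ℕ,
      (∑ i, (al i + al' i)) ≤ 2 * k → (∑ j, (be j + be' j)) ≤ 2 * t →
      ((∑ i, al i) ≠ (∑ i, al' i) ∨ (∑ j, be j) ≠ (∑ j, be' j)) →
      L ((∏ i, X (xv i) ^ al i) * (∏ i, X (xbv i) ^ al' i) *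
          (∏ j, X (yv j) ^ be j) * (∏ j, X (ybv j) ^ be' j)) = 0) :
    (∀ p : SPoly d, MemBi d p k t → 0 ≤ L (p * sconj p)) ↔
    (∀ σ ∈ SigEq d k t, 0 ≤ L σ) := by
  classical
  open Stmt14Aux in
  constructor
  · intro hsq σ hσ
    obtain ⟨⟨N, p, hp, rfl⟩, _⟩ := hσ
    rw [map_sum]
    exact Finset.sum_nonneg fun s _ => hsq (p s) (hp s)
  · intro hsig p hp
    set T := p.support.image (phi d) with hT
    set part : ℤ × ℤ → SPoly d := fun c =>
      ∑ e ∈ p.support.filter (fun e => phi d e = c), monomial e (coeff e p) with hpart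
    have hsum : ∑ c ∈ T, part c = p := by
      rw [hT, hpart,
        Finset.sum_fiberwise_of_maps_to (fun e he => Finset.mem_image_of_mem _ he),
        support_sum_monomial_coeff]
    have hsupp_part : ∀ c, ∀ e ∈ (part c).support, e ∈ p.support ∧ phi d e = c := by
      intro c e he
      rw [hpart] at he
      obtain ⟨e', he', hE⟩ := Finset.mem_biUnion.mp (MvPolynomial.support_sum he)
      have h2 := mem_support_monomial _ _ _ hE
      subst h2
      exact Finset.mem_filter.mp he'
    have hsconj_part : ∀ c, ∀ E ∈ (sconj (part c)).support,
        ∃ e, e ∈ p.support ∧ phi d e = c ∧ E = swE d e := by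
      intro c E hE
      rw [hpart, sconj_sum] at hE
      obtain ⟨e', he', hE2⟩ := Finset.mem_biUnion.mp (MvPolynomial.support_sum hE)
      rw [sconj_monomial] at hE2
      have h2 := mem_support_monomial _ _ _ hE2
      obtain ⟨hm, hphi⟩ := Finset.mem_filter.mp he'
      exact ⟨e', hm, hphi, h2⟩
    have hexp : L (p * sconj p) = ∑ c ∈ T, ∑ c' ∈ T, L (part c * sconj (part c')) := by
      conv_lhs => rw [← hsum]
      rw [sconj_sum, Finset.sum_mul_sum, map_sum]
      exact Finset.sum_congr rfl fun c _ => map_sum L _ _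
    rw [hexp]
    refine Finset.sum_nonneg fun c hc => ?_
    rw [Finset.sum_eq_single_of_mem c hc (fun c' _ hne => ?_)]
    · refine class_nonneg hk ht hidx hidy hsig (part c) c fun e he => ?_
      obtain ⟨hmem, hphi⟩ := hsupp_part c e he
      exact ⟨hp e hmem, hphi⟩
    · refine L_vanish_poly hbal _ fun E hE => ?_
      obtain ⟨E1, h1, E2, h2, rfl⟩ := mem_support_mul _ _ _ hE
      obtain ⟨hm1, hphi1⟩ := hsupp_part c E1 h1
      obtain ⟨e, hme, hphie, rfl⟩ := hsconj_part c' E2 h2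
      have hd1 := (hp E1 hm1).1
      have hd2 := (hp E1 hm1).2
      have hd3 := (hp e hme).1
      have hd4 := (hp e hme).2
      have hA1 : (Am d E1 : ℤ) - Am' d E1 = c.1 := by rw [← phi_fst, hphi1]
      have hB1 : (Bm d E1 : ℤ) - Bm' d E1 = c.2 := by rw [← phi_snd, hphi1]
      have hA2 : (Am d e : ℤ) - Am' d e = c'.1 := by rw [← phi_fst, hphie]
      have hB2 : (Bm d e : ℤ) - Bm' d e = c'.2 := by rw [← phi_snd, hphie]
      have hcc : c.1 ≠ c'.1 ∨ c.2 ≠ c'.2 := by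
        by_contra h
        push_neg at h
        exact hne (Prod.ext h.1.symm h.2.symm)
      refine ⟨?_, ?_, ?_⟩
      · simp only [degXm_add, degXm_swE]; omega
      · simp only [degYm_add, degYm_swE]; omega
      · simp only [Am_add, Am'_add, Bm_add, Bm'_add, Am_swE, Am'_swE, Bm_swE, Bm'_swE]
        rcases hcc with h | h
        · left; omega
        · right; omega
end

section
/- Let G ∈ ℂ[x,x̄]^{m×m} be a polynomial matrix and let G^ℝ ∈ ℝ[x_Re,x_Im]^{2m×2m} be the associated real polynomial matrix G^ℝ = [[G_Re, −G_Im],[G_Im, G_Re]]. Then G is a Hermitian SoS-polynomial matrix (i.e., G = U·U* for some k ∈ ℕ and some polynomial matrix U ∈ ℂ[x,x̄]^{m×k}, where (U*)_{sj} = conj-polynomial of U_{js}) if and only if G^ℝ is a real SoS-polynomial matrix (i.e., G^ℝ = V·V^T for some k' ∈ ℕ and some real polynomial matrix V ∈ ℝ[x_Re,x_Im]^{2m×k'}). -/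
open MvPolynomial

/-- The ring `ℂ[x,x̄]` (variables `x_i` encoded `Sum.inl i`, `x̄_i` encoded
`Sum.inr i`). -/
abbrev CPoly (n : ℕ) := MvPolynomial (Fin n ⊕ Fin n) ℂ

/-- The ring `ℝ[x_Re,x_Im]` (variables `(x_Re)_i` encoded `Sum.inl i`,
`(x_Im)_i` encoded `Sum.inr i`). -/
abbrev RPoly (n : ℕ) := MvPolynomial (Fin n ⊕ Fin n) ℝ

/-- The conjugate polynomial: conjugate all coefficients and exchange each
variable `x_i` with `x̄_i`. -/
noncomputable def cconj {n : ℕ} (p : CPoly n) : CPoly n :=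
  rename (Sum.elim Sum.inr Sum.inl) (map (starRingEnd ℂ) p)

/-- Substitute `x = x_Re + i·x_Im` and `x̄ = x_Re − i·x_Im`. -/
noncomputable def substReIm (n : ℕ) : CPoly n →ₐ[ℂ] CPoly n :=
  aeval (Sum.elim
    (fun i => X (Sum.inl i) + C Complex.I * X (Sum.inr i))
    (fun i => X (Sum.inl i) - C Complex.I * X (Sum.inr i)))

/-- Coefficientwise real part of a complex polynomial. -/
noncomputable def reCoeff {n : ℕ} (q : CPoly n) : RPoly n :=
  ∑ e ∈ q.support, monomial e ((q.coeff e).re)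

/-- Coefficientwise imaginary part of a complex polynomial. -/
noncomputable def imCoeff {n : ℕ} (q : CPoly n) : RPoly n :=
  ∑ e ∈ q.support, monomial e ((q.coeff e).im)

/-- The real part `p_Re ∈ ℝ[x_Re,x_Im]` of `p ∈ ℂ[x,x̄]` under the change of
variables `x = x_Re + i·x_Im`. -/
noncomputable def pRe {n : ℕ} (p : CPoly n) : RPoly n := reCoeff (substReIm n p)

/-- The imaginary part `p_Im ∈ ℝ[x_Re,x_Im]` of `p ∈ ℂ[x,x̄]`. -/
noncomputable def pIm {n : ℕ} (p : CPoly n) : RPoly n := imCoeff (substReIm n p)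

/-- The real polynomial matrix `G^ℝ = [[G_Re, −G_Im],[G_Im, G_Re]]`
associated to `G ∈ ℂ[x,x̄]^{m×m}`. -/
noncomputable def GReal {n m : ℕ} (G : Matrix (Fin m) (Fin m) (CPoly n)) :
    Matrix (Fin m ⊕ Fin m) (Fin m ⊕ Fin m) (RPoly n) :=
  Matrix.fromBlocks
    (Matrix.of fun i j => pRe (G i j)) (Matrix.of fun i j => -pIm (G i j))
    (Matrix.of fun i j => pIm (G i j)) (Matrix.of fun i j => pRe (G i j))

/-! ### Auxiliary machinery -/

noncomputable def mapR {n : ℕ} : RPoly n →+* CPoly n := MvPolynomial.map (algebraMap ℝ ℂ)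

noncomputable def substBack (n : ℕ) : CPoly n →ₐ[ℂ] CPoly n :=
  aeval (Sum.elim
    (fun i => C (2⁻¹ : ℂ) * (X (Sum.inl i) + X (Sum.inr i)))
    (fun i => C (-(Complex.I/2)) * (X (Sum.inl i) - X (Sum.inr i))))

noncomputable def cconjHom {n : ℕ} : CPoly n →+* CPoly n :=
  ((rename (Sum.elim Sum.inr Sum.inl)).toRingHom : CPoly n →+* CPoly n).comp
    (MvPolynomial.map (starRingEnd ℂ))

noncomputable def tau (n : ℕ) : RPoly n →+* CPoly n := (substBack n).toRingHom.comp mapR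

theorem cconj_eq {n : ℕ} (p : CPoly n) : cconj p = cconjHom p := rfl

theorem coeff_reCoeff {n : ℕ} (q : CPoly n) (d) : (reCoeff q).coeff d = (q.coeff d).re := by
  classical
  unfold reCoeff
  rw [MvPolynomial.coeff_sum]
  simp only [coeff_monomial]
  rw [Finset.sum_ite_eq' q.support d]
  by_cases h : d ∈ q.support
  · simp [h]
  · simp [h, MvPolynomial.notMem_support_iff.mp h]

theorem coeff_imCoeff {n : ℕ} (q : CPoly n) (d) : (imCoeff q).coeff d = (q.coeff d).im := by
  classical
  unfold imCoeff
  rw [MvPolynomial.coeff_sum]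
  simp only [coeff_monomial]
  rw [Finset.sum_ite_eq' q.support d]
  by_cases h : d ∈ q.support
  · simp [h]
  · simp [h, MvPolynomial.notMem_support_iff.mp h]

theorem decomp {n : ℕ} (q : CPoly n) :
    mapR (reCoeff q) + C Complex.I * mapR (imCoeff q) = q := by
  ext d
  simp [mapR, coeff_map, coeff_C_mul, coeff_reCoeff, coeff_imCoeff, Complex.ext_iff]

theorem reim_unique {n : ℕ} {a b c d : RPoly n}
    (h : mapR a + C Complex.I * mapR b = mapR c + (C Complex.I : CPoly n) * mapR d) :
    a = c ∧ b = d := by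
  constructor <;> ext e <;>
  · have := congrArg (MvPolynomial.coeff e) h
    simp [mapR, coeff_map, coeff_C_mul, Complex.ext_iff] at this
    tauto

theorem hI {n : ℕ} : (C Complex.I : CPoly n) * C Complex.I = -1 := by
  rw [← C_mul, Complex.I_mul_I, map_neg, map_one]

theorem h2 {n : ℕ} : (2 : CPoly n) * C (2⁻¹ : ℂ) = 1 := by
  rw [show (2 : CPoly n) = C 2 from (map_ofNat C 2).symm, ← C_mul]
  norm_num

theorem substBack_substReIm {n : ℕ} (p : CPoly n) : substBack n (substReIm n p) = p := by
  have h : (substBack n).comp (substReIm n) = AlgHom.id ℂ (CPoly n) := by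
    apply MvPolynomial.algHom_ext
    rintro (i | i) <;>
    · simp only [AlgHom.comp_apply, substReIm, substBack, aeval_X, Sum.elim_inl, Sum.elim_inr,
        map_add, map_sub, map_mul, aeval_C, AlgHom.id_apply]
      rw [show (-(Complex.I/2) : ℂ) = Complex.I * 2⁻¹ * (-1) by ring, C_mul, C_mul]
      simp only [MvPolynomial.algebraMap_eq, map_neg, map_one]
      first
      | linear_combination (-(C (2⁻¹:ℂ) * ((X (Sum.inl i) : CPoly n) - X (Sum.inr i)))) * hI
          + (X (Sum.inl i) : CPoly n) * h2
      | linear_combination ((C (2⁻¹:ℂ) * ((X (Sum.inl i) : CPoly n) - X (Sum.inr i)))) * hI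
          + (X (Sum.inr i) : CPoly n) * h2
  exact congrFun (congrArg DFunLike.coe h) p

theorem substReIm_cconj {n : ℕ} (p : CPoly n) :
    substReIm n (cconj p) = map (starRingEnd ℂ) (substReIm n p) := by
  have h : ((substReIm n).toRingHom.comp cconjHom) =
      (MvPolynomial.map (starRingEnd ℂ)).comp (substReIm n).toRingHom := by
    apply MvPolynomial.ringHom_ext
    · intro a
      simp [cconjHom, substReIm, algebraMap_eq]
    · rintro (i | i) <;>
        simp [cconjHom, substReIm, Complex.conj_I, sub_eq_add_neg]
  exact congrFun (congrArg DFunLike.coe h) p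

theorem cconj_tau {n : ℕ} (r : RPoly n) : cconj (tau n r) = tau n r := by
  have h : cconjHom.comp (tau n) = tau n := by
    apply MvPolynomial.ringHom_ext
    · intro a
      simp [cconjHom, tau, mapR, substBack, algebraMap_eq, Complex.conj_ofReal]
    · rintro (i | i) <;>
        simp only [RingHom.comp_apply, tau, mapR, map_X, AlgHom.toRingHom_eq_coe,
          RingHom.coe_coe, substBack, aeval_X, Sum.elim_inl, Sum.elim_inr, cconjHom,
          map_mul, map_add, map_sub, MvPolynomial.map_C, rename_C, map_X, rename_X,
          map_neg, map_div₀, Complex.conj_I, Complex.conj_ofNat]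
      · rw [show ((starRingEnd ℂ) (2⁻¹:ℂ)) = (2⁻¹:ℂ) by simp [Complex.ext_iff]]; ring
      · rw [show (-Complex.I/2 : ℂ) = Complex.I/2 * (-1) by ring, C_mul, map_neg, map_one]; ring
  rw [cconj_eq]
  exact congrFun (congrArg DFunLike.coe h) r

theorem mapConj_mapR {n : ℕ} (a : RPoly n) :
    map (starRingEnd ℂ) (mapR a) = mapR a := by
  ext d
  simp [mapR, coeff_map, Complex.conj_ofReal]

/-- per-term product rule -/
theorem prod_rule {n : ℕ} (a b c d : RPoly n) :
    (mapR a + C Complex.I * mapR b) * (mapR c - C Complex.I * mapR d) =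
      mapR (a * c + b * d) + C Complex.I * mapR (b * c - a * d) := by
  simp only [map_add, map_sub, map_mul]
  linear_combination (-(mapR b * mapR d)) * (hI (n := n))

theorem tau_decomp {n : ℕ} (p : CPoly n) :
    tau n (pRe p) + C Complex.I * tau n (pIm p) = p := by
  have hd : mapR (pRe p) + C Complex.I * mapR (pIm p) = substReIm n p := decomp _
  have hC : substBack n (C Complex.I) = C Complex.I := by
    rw [show (C Complex.I : CPoly n) = algebraMap ℂ (CPoly n) Complex.I from rfl]
    exact (substBack n).commutes _
  have : tau n (pRe p) + C Complex.I * tau n (pIm p)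
      = substBack n (mapR (pRe p) + C Complex.I * mapR (pIm p)) := by
    simp only [tau, RingHom.comp_apply, map_add, map_mul, hC, AlgHom.toRingHom_eq_coe,
      RingHom.coe_coe]
  rw [this, hd, substBack_substReIm]

theorem cconjHom_C {n : ℕ} (a : ℂ) : (cconjHom (C a) : CPoly n) = C ((starRingEnd ℂ) a) := by
  simp [cconjHom]

theorem mapConj_decomp {n : ℕ} (a b : RPoly n) :
    map (starRingEnd ℂ) (mapR a + C Complex.I * mapR b) = mapR a - C Complex.I * mapR b := by
  rw [map_add, map_mul, mapConj_mapR, mapConj_mapR, MvPolynomial.map_C]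
  simp [Complex.conj_I, map_neg, sub_eq_add_neg]

theorem fwd {n m k : ℕ} (G : Matrix (Fin m) (Fin m) (CPoly n))
    (U : Matrix (Fin m) (Fin k) (CPoly n))
    (h : ∀ i j, G i j = ∑ s, U i s * cconj (U j s)) (i j : Fin m) :
    pRe (G i j) = ∑ s, (pRe (U i s) * pRe (U j s) + pIm (U i s) * pIm (U j s)) ∧
    pIm (G i j) = ∑ s, (pIm (U i s) * pRe (U j s) - pRe (U i s) * pIm (U j s)) := by
  have hdec : ∀ p : CPoly n, mapR (pRe p) + C Complex.I * mapR (pIm p) = substReIm n p :=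
    fun p => decomp _
  have key : mapR (pRe (G i j)) + C Complex.I * mapR (pIm (G i j))
      = mapR (∑ s, (pRe (U i s) * pRe (U j s) + pIm (U i s) * pIm (U j s)))
        + C Complex.I * mapR (∑ s, (pIm (U i s) * pRe (U j s) - pRe (U i s) * pIm (U j s))) := by
    rw [hdec, h i j, map_sum]
    have hterm : ∀ s, substReIm n (U i s * cconj (U j s))
        = mapR (pRe (U i s) * pRe (U j s) + pIm (U i s) * pIm (U j s))
          + C Complex.I * mapR (pIm (U i s) * pRe (U j s) - pRe (U i s) * pIm (U j s)) := by
      intro s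
      rw [map_mul, substReIm_cconj, ← hdec (U i s), ← hdec (U j s), mapConj_decomp, prod_rule]
    rw [Finset.sum_congr rfl (fun s _ => hterm s), Finset.sum_add_distrib,
      ← Finset.mul_sum, ← map_sum, ← map_sum]
  exact reim_unique key

theorem prod_rule_tau {n : ℕ} (a b c d : RPoly n) :
    (tau n a + C Complex.I * tau n b) * (tau n c - C Complex.I * tau n d) =
      tau n (a * c + b * d) + C Complex.I * tau n (b * c - a * d) := by
  simp only [map_add, map_sub, map_mul]
  linear_combination (-(tau n b * tau n d)) * (hI (n := n))


/-- `G` is a Hermitian SoS-polynomial matrix (`G = U U*`) iff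
`G^ℝ` is a real SoS-polynomial matrix (`G^ℝ = V Vᵀ`). -/
theorem stmt19 {n m : ℕ} (G : Matrix (Fin m) (Fin m) (CPoly n)) :
    (∃ (k : ℕ) (U : Matrix (Fin m) (Fin k) (CPoly n)),
        ∀ i j, G i j = ∑ s, U i s * cconj (U j s)) ↔
    (∃ (k' : ℕ) (V : Matrix (Fin m ⊕ Fin m) (Fin k') (RPoly n)),
        ∀ a b, GReal G a b = ∑ s, V a s * V b s) := by
  constructor
  · rintro ⟨k, U, hU⟩
    refine ⟨k + k, fun a s =>
      (Matrix.fromBlocks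
        (Matrix.of fun i t => pRe (U i t)) (Matrix.of fun i t => -pIm (U i t))
        (Matrix.of fun i t => pIm (U i t)) (Matrix.of fun i t => pRe (U i t)))
        a (finSumFinEquiv.symm s), ?_⟩
    intro a b
    set W : Matrix (Fin m ⊕ Fin m) (Fin k ⊕ Fin k) (RPoly n) :=
      Matrix.fromBlocks
        (Matrix.of fun i t => pRe (U i t)) (Matrix.of fun i t => -pIm (U i t))
        (Matrix.of fun i t => pIm (U i t)) (Matrix.of fun i t => pRe (U i t)) with hW
    calc GReal G a b = ∑ t : Fin k ⊕ Fin k, W a t * W b t := ?_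
      _ = ∑ s : Fin (k + k), W a (finSumFinEquiv.symm s) * W b (finSumFinEquiv.symm s) :=
          (Equiv.sum_comp finSumFinEquiv.symm _).symm
    rw [Fintype.sum_sum_type]
    rcases a with i | i <;> rcases b with j | j <;>
      simp only [GReal, hW, Matrix.fromBlocks_apply₁₁, Matrix.fromBlocks_apply₁₂,
        Matrix.fromBlocks_apply₂₁, Matrix.fromBlocks_apply₂₂, Matrix.of_apply,
        neg_mul, mul_neg, neg_neg]
    · rw [(fwd G U hU i j).1, Finset.sum_add_distrib]
    · rw [show -pIm (G i j) = -(∑ s, (pIm (U i s) * pRe (U j s) - pRe (U i s) * pIm (U j s)))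
        from by rw [(fwd G U hU i j).2], Finset.sum_sub_distrib]
      simp [Finset.sum_neg_distrib]
      ring
    · rw [(fwd G U hU i j).2, Finset.sum_sub_distrib]
      simp [Finset.sum_neg_distrib]
      ring
    · rw [(fwd G U hU i j).1, Finset.sum_add_distrib]
      ring
  · rintro ⟨k', V, hV⟩
    set c : ℝ := (Real.sqrt 2)⁻¹ with hc
    have hcc : (C (c : ℂ) : CPoly n) * C (c : ℂ) = C (2⁻¹ : ℂ) := by
      rw [← C_mul, ← Complex.ofReal_mul, hc,
        show ((Real.sqrt 2)⁻¹ * (Real.sqrt 2)⁻¹ : ℝ) = (Real.sqrt 2 * Real.sqrt 2)⁻¹ by ring,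
        Real.mul_self_sqrt (by norm_num)]
      norm_num
    refine ⟨k', fun i s =>
      C (c : ℂ) * (tau n (V (Sum.inl i) s) + C Complex.I * tau n (V (Sum.inr i) s)), ?_⟩
    intro i j
    have hRe1 : pRe (G i j) = ∑ s, V (Sum.inl i) s * V (Sum.inl j) s := hV (Sum.inl i) (Sum.inl j)
    have hRe2 : pRe (G i j) = ∑ s, V (Sum.inr i) s * V (Sum.inr j) s := hV (Sum.inr i) (Sum.inr j)
    have hIm1 : pIm (G i j) = ∑ s, V (Sum.inr i) s * V (Sum.inl j) s := hV (Sum.inr i) (Sum.inl j)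
    have hIm2 : -pIm (G i j) = ∑ s, V (Sum.inl i) s * V (Sum.inr j) s := hV (Sum.inl i) (Sum.inr j)
    have hconj : ∀ b : Fin m, ∀ s,
        cconj (C (c : ℂ) * (tau n (V (Sum.inl b) s) + C Complex.I * tau n (V (Sum.inr b) s)))
        = C (c : ℂ) * (tau n (V (Sum.inl b) s) - C Complex.I * tau n (V (Sum.inr b) s)) := by
      intro b s
      rw [cconj_eq, map_mul, map_add, map_mul, cconjHom_C, cconjHom_C,
        ← cconj_eq, cconj_tau, ← cconj_eq, cconj_tau, Complex.conj_ofReal, Complex.conj_I,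
        map_neg]
      ring
    have hterm : ∀ s,
        (C (c : ℂ) * (tau n (V (Sum.inl i) s) + C Complex.I * tau n (V (Sum.inr i) s))) *
        (C (c : ℂ) * (tau n (V (Sum.inl j) s) - C Complex.I * tau n (V (Sum.inr j) s)))
        = C (2⁻¹ : ℂ) *
          (tau n (V (Sum.inl i) s * V (Sum.inl j) s + V (Sum.inr i) s * V (Sum.inr j) s)
           + C Complex.I *
             tau n (V (Sum.inr i) s * V (Sum.inl j) s - V (Sum.inl i) s * V (Sum.inr j) s)) := by
      intro s
      rw [← prod_rule_tau]
      linear_combination (tau n (V (Sum.inl i) s) + C Complex.I * tau n (V (Sum.inr i) s)) *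
        (tau n (V (Sum.inl j) s) - C Complex.I * tau n (V (Sum.inr j) s)) * hcc
    calc G i j = tau n (pRe (G i j)) + C Complex.I * tau n (pIm (G i j)) := (tau_decomp _).symm
      _ = ∑ s, (C (c : ℂ) * (tau n (V (Sum.inl i) s) + C Complex.I * tau n (V (Sum.inr i) s))) *
            (C (c : ℂ) * (tau n (V (Sum.inl j) s) - C Complex.I * tau n (V (Sum.inr j) s))) := by
          rw [Finset.sum_congr rfl (fun s _ => hterm s), ← Finset.mul_sum,
            Finset.sum_add_distrib, ← Finset.mul_sum, ← map_sum, ← map_sum,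
            show (∑ s, (V (Sum.inl i) s * V (Sum.inl j) s + V (Sum.inr i) s * V (Sum.inr j) s))
              = 2 * pRe (G i j) from by
                rw [Finset.sum_add_distrib, ← hRe1, ← hRe2]; ring,
            show (∑ s, (V (Sum.inr i) s * V (Sum.inl j) s - V (Sum.inl i) s * V (Sum.inr j) s))
              = 2 * pIm (G i j) from by
                rw [Finset.sum_sub_distrib, ← hIm1, ← hIm2]; ring,
            map_mul, map_mul]
          rw [show (tau n (2 : RPoly n)) = (2 : CPoly n) from map_ofNat (tau n) 2]
          linear_combination (-(tau n (pRe (G i j)) + C Complex.I * tau n (pIm (G i j)))) * (h2 (n := n))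
      _ = ∑ s, (C (c : ℂ) * (tau n (V (Sum.inl i) s) + C Complex.I * tau n (V (Sum.inr i) s))) *
            cconj (C (c : ℂ) * (tau n (V (Sum.inl j) s) + C Complex.I * tau n (V (Sum.inr j) s))) := by
          exact Finset.sum_congr rfl (fun s _ => by rw [hconj j s])
end
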